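/- arXiv:2007.08329 — 2 statements merged into one kernel-verified Lean document; each statement's English description precedes it below -/
import Mathlib

section
/- (Tame product estimate.) For all s₀ > d/2 and all t ≥ 0, there exists C > 0 such that for all σ ≥ 0, ‖u₁u₂‖_{H^{σ,t}} ≤ C ‖u₁‖_{H^{σ,s₀}} ‖u₂‖_{H^{σ,t}} + C ‖u₂‖_{H^{σ,s₀}} ‖u₁‖_{H^{σ,t}}, for all u₁, u₂ ∈ H^{σ,s₀} ∩ H^{σ,t}. -/
open scoped ENNReal BigOperators

/-- Euclidean norm of a lattice point `ξ ∈ ℤ^d`. -/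
noncomputable def latNorm {d : ℕ} (ξ : Fin d → ℤ) : ℝ :=
  Real.sqrt (∑ i, ((ξ i : ℝ)) ^ 2)

/-- Japanese bracket `⟨ξ⟩ = (1+|ξ|²)^{1/2}`. -/
noncomputable def latJap {d : ℕ} (ξ : Fin d → ℤ) : ℝ :=
  Real.sqrt (1 + ∑ i, ((ξ i : ℝ)) ^ 2)

/-- Weight `e^{2σ|ξ|}⟨ξ⟩^{2s}` of the analytic Sobolev space `H^{σ,s}(T^d)`. -/
noncomputable def hWeight {d : ℕ} (σ s : ℝ) (ξ : Fin d → ℤ) : ℝ≥0∞ :=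
  ENNReal.ofReal (Real.exp (2 * σ * latNorm ξ) * (latJap ξ) ^ (2 * s))

/-- Squared `H^{σ,s}(T^d)` norm of a function given by its Fourier
coefficients `c : ℤ^d → ℂ`. -/
noncomputable def hNormSq {d : ℕ} (σ s : ℝ) (c : (Fin d → ℤ) → ℂ) : ℝ≥0∞ :=
  ∑' ξ, hWeight σ s ξ * (‖c ξ‖₊ : ℝ≥0∞) ^ 2

/-- `H^{σ,s}(T^d)` norm. -/
noncomputable def hNorm {d : ℕ} (σ s : ℝ) (c : (Fin d → ℤ) → ℂ) : ℝ≥0∞ :=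
  (hNormSq σ s c) ^ (1/2 : ℝ)

/-- Convolution of Fourier coefficients: this represents the pointwise
product of the corresponding functions on `T^d` (up to the fixed
normalization factor `(2π)^{-d}`, harmless for the estimates below). -/
noncomputable def conv {d : ℕ} (f g : (Fin d → ℤ) → ℂ) : (Fin d → ℤ) → ℂ :=
  fun ξ => ∑' ζ, f (ξ - ζ) * g ζ

section Auxiliary

open MeasureTheory

lemma st10_sqrt_sq (x : ℝ≥0∞) : (x ^ 2) ^ (1/2 : ℝ) = x := by
  rw [← ENNReal.rpow_natCast x 2, ← ENNReal.rpow_mul]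
  norm_num

lemma st10_sq_sqrt (x : ℝ≥0∞) : x ^ (1/2 : ℝ) * x ^ (1/2 : ℝ) = x := by
  rw [← sq, ← ENNReal.rpow_natCast (x ^ (1/2:ℝ)) 2, ← ENNReal.rpow_mul]
  norm_num

/-- Cauchy–Schwarz for `tsum` in `ℝ≥0∞`. -/
lemma st10_cs {α : Type*} [Countable α] (f g : α → ℝ≥0∞) :
    ∑' a, f a * g a ≤ (∑' a, f a ^ 2) ^ (1/2 : ℝ) * (∑' a, g a ^ 2) ^ (1/2 : ℝ) := by
  letI : MeasurableSpace α := ⊤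
  haveI : MeasurableSingletonClass α := ⟨fun _ => trivial⟩
  have hmf : Measurable f := fun s _ => trivial
  have hmg : Measurable g := fun s _ => trivial
  have hpq : Real.HolderConjugate 2 2 := Real.HolderConjugate.two_two
  have h := ENNReal.lintegral_mul_le_Lp_mul_Lq (Measure.count (α := α)) hpq
    hmf.aemeasurable hmg.aemeasurable
  rw [lintegral_count, lintegral_count, lintegral_count] at h
  simp_rw [show (2:ℝ) = ((2:ℕ):ℝ) by norm_num, ENNReal.rpow_natCast, Pi.mul_apply] at h
  convert h using 3 <;> norm_num

/-- Minkowski/triangle for the `ℓ²` norm in `ℝ≥0∞`. -/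
lemma st10_l2_add {α : Type*} [Countable α] (f g : α → ℝ≥0∞) :
    (∑' a, (f a + g a) ^ 2) ^ (1/2 : ℝ)
      ≤ (∑' a, f a ^ 2) ^ (1/2 : ℝ) + (∑' a, g a ^ 2) ^ (1/2 : ℝ) := by
  letI : MeasurableSpace α := ⊤
  haveI : MeasurableSingletonClass α := ⟨fun _ => trivial⟩
  have hmf : Measurable f := fun s _ => trivial
  have hmg : Measurable g := fun s _ => trivial
  have h := ENNReal.lintegral_Lp_add_le (μ := Measure.count (α := α)) (p := 2)
    hmf.aemeasurable hmg.aemeasurable one_le_two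
  rw [lintegral_count, lintegral_count, lintegral_count] at h
  simp_rw [show (2:ℝ) = ((2:ℕ):ℝ) by norm_num, ENNReal.rpow_natCast, Pi.add_apply] at h
  convert h using 3 <;> norm_num

lemma st10_tsum_sub {α : Type*} [AddCommGroup α] (f : α → ℝ≥0∞) (ζ : α) :
    ∑' ξ, f (ξ - ζ) = ∑' ξ, f ξ :=
  (Equiv.subRight ζ).tsum_eq f

/-- Young's inequality `‖f ⋆ φ‖₂ ≤ ‖φ‖₁ ‖f‖₂` (squared form) on a countable group. -/
lemma st10_young {α : Type*} [AddCommGroup α] [Countable α] (f φ : α → ℝ≥0∞) :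
    ∑' ξ, (∑' ζ, f (ξ - ζ) * φ ζ) ^ 2 ≤ (∑' ζ, f ζ ^ 2) * (∑' ζ, φ ζ) ^ 2 := by
  have step1 : ∀ ξ, (∑' ζ, f (ξ - ζ) * φ ζ) ^ 2
      ≤ (∑' ζ, f (ξ - ζ) ^ 2 * φ ζ) * (∑' ζ, φ ζ) := by
    intro ξ
    have h1 : ∑' ζ, f (ξ - ζ) * φ ζ
        = ∑' ζ, (f (ξ - ζ) * φ ζ ^ (1/2:ℝ)) * φ ζ ^ (1/2:ℝ) := by
      refine tsum_congr fun ζ => ?_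
      rw [mul_assoc, st10_sq_sqrt]
    rw [h1]
    have h2 := st10_cs (fun ζ => f (ξ - ζ) * φ ζ ^ (1/2:ℝ)) (fun ζ => φ ζ ^ (1/2:ℝ))
    have h3 : ∀ ζ, (f (ξ - ζ) * φ ζ ^ (1/2:ℝ)) ^ 2 = f (ξ - ζ) ^ 2 * φ ζ := by
      intro ζ; rw [mul_pow, sq (φ ζ ^ (1/2:ℝ)), st10_sq_sqrt]
    have h4 : ∀ ζ : α, (φ ζ ^ (1/2:ℝ)) ^ 2 = φ ζ := by
      intro ζ; rw [sq, st10_sq_sqrt]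
    simp_rw [h3, h4] at h2
    calc (∑' ζ, (f (ξ - ζ) * φ ζ ^ (1/2:ℝ)) * φ ζ ^ (1/2:ℝ)) ^ 2
        ≤ ((∑' ζ, f (ξ - ζ) ^ 2 * φ ζ) ^ (1/2:ℝ) * (∑' ζ, φ ζ) ^ (1/2:ℝ)) ^ 2 := by
          exact pow_le_pow_left₀ zero_le h2 2
      _ = (∑' ζ, f (ξ - ζ) ^ 2 * φ ζ) * (∑' ζ, φ ζ) := by
          rw [mul_pow, sq, st10_sq_sqrt, sq, st10_sq_sqrt]
  calc ∑' ξ, (∑' ζ, f (ξ - ζ) * φ ζ) ^ 2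
      ≤ ∑' ξ, (∑' ζ, f (ξ - ζ) ^ 2 * φ ζ) * (∑' ζ, φ ζ) :=
        Summable.tsum_le_tsum step1 ENNReal.summable ENNReal.summable
    _ = (∑' ξ, ∑' ζ, f (ξ - ζ) ^ 2 * φ ζ) * (∑' ζ, φ ζ) := ENNReal.tsum_mul_right
    _ = (∑' ζ, ∑' ξ, f (ξ - ζ) ^ 2 * φ ζ) * (∑' ζ, φ ζ) := by rw [ENNReal.tsum_comm]
    _ = (∑' ζ, (∑' ξ, f (ξ - ζ) ^ 2) * φ ζ) * (∑' ζ, φ ζ) := by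
        congr 1; exact tsum_congr fun ζ => ENNReal.tsum_mul_right
    _ = (∑' ζ, f ζ ^ 2) * (∑' ζ, φ ζ) ^ 2 := by
        have : ∀ ζ : α, (∑' ξ, f (ξ - ζ) ^ 2) = ∑' ξ, f ξ ^ 2 :=
          fun ζ => st10_tsum_sub (fun ξ => f ξ ^ 2) ζ
        simp_rw [this, ENNReal.tsum_mul_left]
        ring

lemma latNorm_nonneg {d : ℕ} (ξ : Fin d → ℤ) : 0 ≤ latNorm ξ := Real.sqrt_nonneg _

noncomputable def latVec {d : ℕ} (ξ : Fin d → ℤ) : EuclideanSpace ℝ (Fin d) :=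
  (WithLp.equiv 2 (Fin d → ℝ)).symm (fun i => (ξ i : ℝ))

lemma latNorm_eq {d : ℕ} (ξ : Fin d → ℤ) : latNorm ξ = ‖latVec ξ‖ := by
  rw [EuclideanSpace.norm_eq]
  unfold latNorm
  congr 1
  refine Finset.sum_congr rfl fun i _ => ?_
  rw [show latVec ξ i = ((ξ i : ℝ)) from rfl, Real.norm_eq_abs, sq_abs]

lemma latNorm_triangle {d : ℕ} (ξ ζ : Fin d → ℤ) :
    latNorm ξ ≤ latNorm (ξ - ζ) + latNorm ζ := by
  rw [latNorm_eq, latNorm_eq, latNorm_eq]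
  have h : latVec ξ = latVec (ξ - ζ) + latVec ζ := by
    ext i
    show (ξ i : ℝ) = ((ξ - ζ) i : ℝ) + (ζ i : ℝ)
    push_cast [Pi.sub_apply]
    ring
  rw [h]
  exact norm_add_le _ _

lemma latJap_one_le {d : ℕ} (ξ : Fin d → ℤ) : 1 ≤ latJap ξ := by
  rw [show (1:ℝ) = Real.sqrt 1 by simp]
  apply Real.sqrt_le_sqrt
  have : (0:ℝ) ≤ ∑ i, ((ξ i : ℝ)) ^ 2 := by positivity
  linarith

lemma latJap_pos {d : ℕ} (ξ : Fin d → ℤ) : 0 < latJap ξ :=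
  lt_of_lt_of_le one_pos (latJap_one_le ξ)

lemma latJap_eq {d : ℕ} (ξ : Fin d → ℤ) :
    latJap ξ = Real.sqrt (1 + latNorm ξ ^ 2) := by
  unfold latJap latNorm
  rw [Real.sq_sqrt (by positivity)]

lemma latJap_triangle {d : ℕ} (ξ ζ : Fin d → ℤ) :
    latJap ξ ≤ latJap (ξ - ζ) + latJap ζ := by
  set a := latNorm (ξ - ζ) with ha
  set b := latNorm ζ with hb
  set c := latNorm ξ with hc
  have hc' : c ≤ a + b := latNorm_triangle ξ ζ
  have ha0 : 0 ≤ a := latNorm_nonneg _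
  have hb0 : 0 ≤ b := latNorm_nonneg _
  have hc0 : 0 ≤ c := latNorm_nonneg _
  rw [latJap_eq, latJap_eq, latJap_eq]
  set A := Real.sqrt (1 + a ^ 2) with hA
  set B := Real.sqrt (1 + b ^ 2) with hBB
  have hA2 : A ^ 2 = 1 + a ^ 2 := Real.sq_sqrt (by positivity)
  have hB2 : B ^ 2 = 1 + b ^ 2 := Real.sq_sqrt (by positivity)
  have hA0 : 0 ≤ A := Real.sqrt_nonneg _
  have hB0 : 0 ≤ B := Real.sqrt_nonneg _
  have hAB : 1 + a * b ≤ A * B := by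
    rw [hA, hBB, ← Real.sqrt_mul (by positivity)]
    rw [show (1 + a*b) = Real.sqrt ((1+a*b)^2) from (Real.sqrt_sq (by positivity)).symm]
    apply Real.sqrt_le_sqrt
    nlinarith [sq_nonneg (a - b)]
  have key : 1 + c ^ 2 ≤ (A + B) ^ 2 := by nlinarith [sq_nonneg (a + b - c)]
  calc Real.sqrt (1 + c ^ 2) ≤ Real.sqrt ((A + B) ^ 2) := Real.sqrt_le_sqrt key
    _ = A + B := Real.sqrt_sq (by positivity)

lemma st10_ofReal_prod {ι : Type*} (s : Finset ι) (f : ι → ℝ) (h : ∀ i ∈ s, 0 ≤ f i) :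
    ENNReal.ofReal (∏ i ∈ s, f i) = ∏ i ∈ s, ENNReal.ofReal (f i) := by
  induction s using Finset.cons_induction with
  | empty => simp
  | cons a s ha ih =>
    rw [Finset.prod_cons, Finset.prod_cons,
      ENNReal.ofReal_mul (h a (Finset.mem_cons_self a s)),
      ih (fun i hi => h i (Finset.mem_cons_of_mem hi))]

lemma st10_tsum_pi_pow (m : ℕ) (g : ℤ → ℝ≥0∞) :
    ∑' ξ : Fin m → ℤ, ∏ i, g (ξ i) = (∑' n : ℤ, g n) ^ m := by
  induction m with
  | zero =>
    rw [pow_zero]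
    have : ∀ ξ : Fin 0 → ℤ, ∏ i, g (ξ i) = 1 := fun ξ => by simp
    simp_rw [this]
    exact tsum_eq_single (default : Fin 0 → ℤ)
      (fun b hb => absurd (Subsingleton.elim b default) hb)
  | succ m ih =>
    have he := (Fin.consEquiv (fun _ : Fin (m+1) => ℤ)).tsum_eq (fun ξ : Fin (m+1) → ℤ => ∏ i, g (ξ i))
    rw [← he]
    have : ∀ p : ℤ × (Fin m → ℤ),
        (∏ i, g ((Fin.consEquiv (fun _ : Fin (m+1) => ℤ) p) i)) = g p.1 * ∏ i, g (p.2 i) := by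
      intro p
      rw [Fin.prod_univ_succ]
      simp [Fin.consEquiv]
    simp_rw [this]
    rw [ENNReal.tsum_prod']
    simp_rw [ENNReal.tsum_mul_left]
    rw [ENNReal.tsum_mul_right, ih, pow_succ]
    ring

lemma st10_summable (q : ℝ) (hq : 1/2 < q) :
    Summable (fun n : ℤ => (1 + (n:ℝ)^2) ^ (-q)) := by
  have hmaj : Summable (fun n : ℤ => |(n:ℝ)| ^ (-(2*q)) + if n = 0 then 1 else 0) := by
    apply Summable.add
    · exact Real.summable_abs_int_rpow (by linarith)
    · exact summable_of_ne_finset_zero (s := {(0:ℤ)}) (fun n hn => by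
        simp only [Finset.mem_singleton] at hn; simp [hn])
  apply Summable.of_nonneg_of_le (fun n => by positivity) _ hmaj
  intro n
  rcases eq_or_ne n 0 with rfl | hn
  · simp only [Int.cast_zero, abs_zero, if_pos rfl]
    rw [show ((1:ℝ) + (0:ℝ) ^ 2) = 1 by norm_num, Real.one_rpow,
      Real.zero_rpow (ne_of_lt (by linarith : -(2*q) < 0))]
    norm_num
  · have h1 : (0:ℝ) < (n:ℝ)^2 := by
      have : (n:ℝ) ≠ 0 := Int.cast_ne_zero.mpr hn
      positivity
    have h2 : (1 + (n:ℝ)^2) ^ (-q) ≤ ((n:ℝ)^2) ^ (-q) := by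
      apply Real.rpow_le_rpow_of_nonpos h1 (by linarith) (by linarith)
    have h3 : ((n:ℝ)^2) ^ (-q) = |(n:ℝ)| ^ (-(2*q)) := by
      rw [← sq_abs, ← Real.rpow_natCast |(n:ℝ)| 2, ← Real.rpow_mul (abs_nonneg _)]
      norm_num
    calc (1 + (n:ℝ)^2) ^ (-q) ≤ ((n:ℝ)^2) ^ (-q) := h2
      _ = |(n:ℝ)| ^ (-(2*q)) + 0 := by rw [h3, add_zero]
      _ ≤ _ := by simp [hn]

lemma st10_K_ne_top (d : ℕ) (s₀ : ℝ) (hs₀ : (d : ℝ) / 2 < s₀) :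
    ∑' ξ : Fin d → ℤ, (ENNReal.ofReal (latJap ξ ^ (-s₀))) ^ 2 ≠ ⊤ := by
  have hs₀0 : 0 < s₀ := lt_of_le_of_lt (by positivity) hs₀
  have hterm : ∀ ξ : Fin d → ℤ, (ENNReal.ofReal (latJap ξ ^ (-s₀))) ^ 2
      = ENNReal.ofReal ((1 + ∑ i, ((ξ i : ℝ)) ^ 2) ^ (-s₀)) := by
    intro ξ
    have hJ : 0 < latJap ξ := latJap_pos ξ
    have hS : (0:ℝ) ≤ 1 + ∑ i, ((ξ i : ℝ)) ^ 2 := by positivity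
    rw [← ENNReal.ofReal_pow (Real.rpow_nonneg hJ.le _),
      ← Real.rpow_natCast (latJap ξ ^ (-s₀)) 2, ← Real.rpow_mul hJ.le]
    congr 1
    unfold latJap
    rw [Real.sqrt_eq_rpow, ← Real.rpow_mul hS]
    ring_nf
  simp_rw [hterm]
  rcases Nat.eq_zero_or_pos d with rfl | hd
  · rw [tsum_eq_single (default : Fin 0 → ℤ)
      (fun b hb => absurd (Subsingleton.elim b default) hb)]
    exact ENNReal.ofReal_ne_top
  have hd' : (0:ℝ) < d := by exact_mod_cast hd
  set q : ℝ := s₀ / d with hqdef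
  have hq : 1/2 < q := by rw [hqdef, lt_div_iff₀ hd']; linarith [hs₀]
  have hbound : ∀ ξ : Fin d → ℤ,
      ENNReal.ofReal ((1 + ∑ i, ((ξ i : ℝ)) ^ 2) ^ (-s₀))
        ≤ ∏ i, ENNReal.ofReal ((1 + ((ξ i : ℝ))^2) ^ (-q)) := by
    intro ξ
    set S : ℝ := 1 + ∑ i, ((ξ i : ℝ)) ^ 2 with hSdef
    have hS1 : 1 ≤ S := by
      have : (0:ℝ) ≤ ∑ i, ((ξ i : ℝ)) ^ 2 := by positivity
      simp [hSdef]; linarith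
    have hS0 : 0 < S := lt_of_lt_of_le one_pos hS1
    have hfac : ∀ i, (0:ℝ) < 1 + ((ξ i : ℝ))^2 := fun i => by positivity
    have hP : (0:ℝ) < ∏ i, (1 + ((ξ i : ℝ))^2) := Finset.prod_pos (fun i _ => hfac i)
    have hPS : ∏ i, (1 + ((ξ i : ℝ))^2) ≤ S ^ (d:ℕ) := by
      calc ∏ i, (1 + ((ξ i : ℝ))^2) ≤ ∏ _i : Fin d, S := by
            apply Finset.prod_le_prod (fun i _ => (hfac i).le)
            intro i _
            rw [hSdef]
            have : ((ξ i : ℝ))^2 ≤ ∑ j, ((ξ j : ℝ)) ^ 2 :=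
              Finset.single_le_sum (f := fun j => ((ξ j : ℝ))^2)
                (fun j _ => by positivity) (Finset.mem_univ i)
            linarith
        _ = S ^ (d:ℕ) := by rw [Finset.prod_const, Finset.card_univ, Fintype.card_fin]
    have hmain : S ^ (-s₀) ≤ ∏ i, (1 + ((ξ i : ℝ))^2) ^ (-q) := by
      have h1 : S ^ (-s₀) = (S ^ (d:ℕ)) ^ (-q) := by
        rw [← Real.rpow_natCast S d, ← Real.rpow_mul hS0.le]
        congr 1
        rw [hqdef]; field_simp
      rw [h1, Real.finset_prod_rpow _ _ (fun i _ => (hfac i).le)]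
      exact Real.rpow_le_rpow_of_nonpos hP hPS (by linarith)
    calc ENNReal.ofReal (S ^ (-s₀)) ≤ ENNReal.ofReal (∏ i, (1 + ((ξ i : ℝ))^2) ^ (-q)) :=
          ENNReal.ofReal_le_ofReal hmain
      _ = ∏ i, ENNReal.ofReal ((1 + ((ξ i : ℝ))^2) ^ (-q)) :=
          st10_ofReal_prod _ _ (fun i _ => by positivity)
  have hsum := st10_summable q hq
  have hfin : (∑' n : ℤ, ENNReal.ofReal ((1 + (n:ℝ)^2) ^ (-q))) ≠ ⊤ := by
    rw [← ENNReal.ofReal_tsum_of_nonneg (fun n => by positivity) hsum]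
    exact ENNReal.ofReal_ne_top
  have hpi := st10_tsum_pi_pow d (fun n => ENNReal.ofReal ((1 + (n:ℝ)^2) ^ (-q)))
  refine ne_top_of_le_ne_top ?_ (Summable.tsum_le_tsum hbound ENNReal.summable ENNReal.summable)
  rw [hpi]
  exact ENNReal.pow_ne_top hfin

/-- `e^{σ|ξ|}⟨ξ⟩^s` as an extended real. -/
noncomputable def st10W {d : ℕ} (σ s : ℝ) (ξ : Fin d → ℤ) : ℝ≥0∞ :=
  ENNReal.ofReal (Real.exp (σ * latNorm ξ) * latJap ξ ^ s)

/-- `e^{σ|ξ|}` as an extended real. -/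
noncomputable def st10E {d : ℕ} (σ : ℝ) (ξ : Fin d → ℤ) : ℝ≥0∞ :=
  ENNReal.ofReal (Real.exp (σ * latNorm ξ))

lemma st10_hWeight_eq {d : ℕ} (σ s : ℝ) (ξ : Fin d → ℤ) :
    hWeight σ s ξ = st10W σ s ξ ^ 2 := by
  unfold hWeight st10W
  rw [← ENNReal.ofReal_pow (mul_nonneg (Real.exp_pos _).le (Real.rpow_nonneg (latJap_pos ξ).le _))]
  congr 1
  rw [mul_pow, ← Real.exp_nat_mul, ← Real.rpow_natCast (latJap ξ ^ s) 2,
    ← Real.rpow_mul (latJap_pos ξ).le]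
  norm_num
  ring_nf

lemma st10_hNormSq_eq {d : ℕ} (σ s : ℝ) (c : (Fin d → ℤ) → ℂ) :
    hNormSq σ s c = ∑' ξ, (st10W σ s ξ * (‖c ξ‖₊ : ℝ≥0∞)) ^ 2 := by
  unfold hNormSq
  exact tsum_congr fun ξ => by rw [st10_hWeight_eq, mul_pow]

lemma st10_key_real {d : ℕ} {σ t : ℝ} (hσ : 0 ≤ σ) (ht : 0 ≤ t) (ξ ζ : Fin d → ℤ) :
    Real.exp (σ * latNorm ξ) * latJap ξ ^ t
      ≤ 2 ^ t * ((Real.exp (σ * latNorm (ξ - ζ)) * latJap (ξ - ζ) ^ t) * Real.exp (σ * latNorm ζ)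
        + Real.exp (σ * latNorm (ξ - ζ)) * (Real.exp (σ * latNorm ζ) * latJap ζ ^ t)) := by
  set J1 := latJap (ξ - ζ) with hJ1
  set J2 := latJap ζ with hJ2
  have hJ1p : 0 < J1 := latJap_pos _
  have hJ2p : 0 < J2 := latJap_pos _
  have hexp : Real.exp (σ * latNorm ξ)
      ≤ Real.exp (σ * latNorm (ξ - ζ)) * Real.exp (σ * latNorm ζ) := by
    rw [← Real.exp_add]
    apply Real.exp_le_exp.mpr
    have := mul_le_mul_of_nonneg_left (latNorm_triangle ξ ζ) hσ
    linarith [this]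
  have hJ : latJap ξ ^ t ≤ 2 ^ t * (J1 ^ t + J2 ^ t) := by
    have h1 : latJap ξ ≤ 2 * max J1 J2 := by
      rcases le_total J1 J2 with h | h
      · calc latJap ξ ≤ J1 + J2 := latJap_triangle ξ ζ
          _ ≤ 2 * max J1 J2 := by rw [max_eq_right h]; linarith
      · calc latJap ξ ≤ J1 + J2 := latJap_triangle ξ ζ
          _ ≤ 2 * max J1 J2 := by rw [max_eq_left h]; linarith
    have h2 : latJap ξ ^ t ≤ (2 * max J1 J2) ^ t :=
      Real.rpow_le_rpow (latJap_pos ξ).le h1 ht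
    have h3 : (2 * max J1 J2) ^ t = 2 ^ t * (max J1 J2) ^ t :=
      Real.mul_rpow (by norm_num) (le_max_of_le_left hJ1p.le)
    have h4 : (max J1 J2) ^ t ≤ J1 ^ t + J2 ^ t := by
      rcases max_cases J1 J2 with ⟨hm, _⟩ | ⟨hm, _⟩ <;> rw [hm]
      · have : (0:ℝ) ≤ J2 ^ t := Real.rpow_nonneg hJ2p.le t
        linarith
      · have : (0:ℝ) ≤ J1 ^ t := Real.rpow_nonneg hJ1p.le t
        linarith
    calc latJap ξ ^ t ≤ 2 ^ t * (max J1 J2) ^ t := by rw [← h3]; exact h2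
      _ ≤ 2 ^ t * (J1 ^ t + J2 ^ t) := by
          apply mul_le_mul_of_nonneg_left h4 (by positivity)
  calc Real.exp (σ * latNorm ξ) * latJap ξ ^ t
      ≤ (Real.exp (σ * latNorm (ξ - ζ)) * Real.exp (σ * latNorm ζ))
        * (2 ^ t * (J1 ^ t + J2 ^ t)) := by
        apply mul_le_mul hexp hJ (Real.rpow_nonneg (latJap_pos _).le _) (by positivity)
    _ = 2 ^ t * ((Real.exp (σ * latNorm (ξ - ζ)) * J1 ^ t) * Real.exp (σ * latNorm ζ)
        + Real.exp (σ * latNorm (ξ - ζ)) * (Real.exp (σ * latNorm ζ) * J2 ^ t)) := by ring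

lemma st10_key {d : ℕ} {σ t : ℝ} (hσ : 0 ≤ σ) (ht : 0 ≤ t) (ξ ζ : Fin d → ℤ) :
    st10W σ t ξ ≤ ENNReal.ofReal (2 ^ t)
      * (st10W σ t (ξ - ζ) * st10E σ ζ + st10E σ (ξ - ζ) * st10W σ t ζ) := by
  unfold st10W st10E
  have hWn : ∀ ζ' : Fin d → ℤ, 0 ≤ Real.exp (σ * latNorm ζ') * latJap ζ' ^ t :=
    fun ζ' => mul_nonneg (Real.exp_pos _).le (Real.rpow_nonneg (latJap_pos _).le _)
  rw [← ENNReal.ofReal_mul (hWn _), ← ENNReal.ofReal_mul (Real.exp_pos _).le,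
    ← ENNReal.ofReal_add (mul_nonneg (hWn _) (Real.exp_pos _).le)
      (mul_nonneg (Real.exp_pos _).le (mul_nonneg (Real.exp_pos _).le
        (Real.rpow_nonneg (latJap_pos _).le _))),
    ← ENNReal.ofReal_mul (by positivity)]
  exact ENNReal.ofReal_le_ofReal (st10_key_real hσ ht ξ ζ)

lemma st10_e_eq {d : ℕ} (σ s₀ : ℝ) (ξ : Fin d → ℤ) :
    st10E σ ξ = ENNReal.ofReal (latJap ξ ^ (-s₀)) * st10W σ s₀ ξ := by
  unfold st10E st10W
  rw [← ENNReal.ofReal_mul (Real.rpow_nonneg (latJap_pos ξ).le _)]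
  congr 1
  have h1 : latJap ξ ^ (-s₀) * latJap ξ ^ s₀ = 1 := by
    rw [← Real.rpow_add (latJap_pos ξ)]
    simp
  rw [show (latJap ξ ^ (-s₀) * (Real.exp (σ * latNorm ξ) * latJap ξ ^ s₀))
      = (latJap ξ ^ (-s₀) * latJap ξ ^ s₀) * Real.exp (σ * latNorm ξ) by ring, h1, one_mul]

lemma st10_nnnorm_tsum {β : Type*} (f : β → ℂ) :
    (‖∑' b, f b‖₊ : ℝ≥0∞) ≤ ∑' b, (‖f b‖₊ : ℝ≥0∞) := by
  by_cases hs : Summable (fun b => ‖f b‖₊)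
  · rw [← ENNReal.coe_tsum hs]
    exact_mod_cast nnnorm_tsum_le hs
  · have : (∑' b, (‖f b‖₊ : ℝ≥0∞)) = ⊤ := by
      by_contra h
      exact hs (ENNReal.tsum_coe_ne_top_iff_summable.mp h)
    rw [this]
    exact le_top

end Auxiliary

/-- tame product estimate. For `s₀ > d/2` and `t ≥ 0`,
`‖u₁u₂‖_{H^{σ,t}} ≤ C(‖u₁‖_{H^{σ,s₀}}‖u₂‖_{H^{σ,t}} + ‖u₂‖_{H^{σ,s₀}}‖u₁‖_{H^{σ,t}})`,
uniformly in `σ ≥ 0`. -/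
theorem statement10 (d : ℕ) (s₀ t : ℝ) (hs₀ : (d : ℝ) / 2 < s₀) (ht : 0 ≤ t) :
    ∃ C : ℝ, 0 < C ∧ ∀ σ : ℝ, 0 ≤ σ → ∀ u₁ u₂ : (Fin d → ℤ) → ℂ,
      hNormSq σ s₀ u₁ ≠ ⊤ → hNormSq σ t u₁ ≠ ⊤ →
      hNormSq σ s₀ u₂ ≠ ⊤ → hNormSq σ t u₂ ≠ ⊤ →
      hNorm σ t (conv u₁ u₂)
        ≤ ENNReal.ofReal C * hNorm σ s₀ u₁ * hNorm σ t u₂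
          + ENNReal.ofReal C * hNorm σ s₀ u₂ * hNorm σ t u₁ := by
  set K : ℝ≥0∞ := ∑' ξ : Fin d → ℤ, (ENNReal.ofReal (latJap ξ ^ (-s₀))) ^ 2 with hKdef
  have hK : K ≠ ⊤ := st10_K_ne_top d s₀ hs₀
  refine ⟨2 ^ t * (K.toReal ^ (1/2:ℝ) + 1), by positivity, ?_⟩
  intro σ hσ u₁ u₂ _ _ _ _
  set C : ℝ := 2 ^ t * (K.toReal ^ (1/2:ℝ) + 1) with hCdef
  have hCmain : ENNReal.ofReal (2 ^ t) * K ^ (1/2:ℝ) ≤ ENNReal.ofReal C := by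
    have h1 : K ^ (1/2:ℝ) = ENNReal.ofReal (K.toReal ^ (1/2:ℝ)) := by
      conv_lhs => rw [← ENNReal.ofReal_toReal hK]
      rw [← ENNReal.ofReal_rpow_of_nonneg ENNReal.toReal_nonneg (by norm_num)]
    rw [h1, hCdef, ENNReal.ofReal_mul (by positivity)]
    refine mul_le_mul_right (ENNReal.ofReal_le_ofReal ?_) _
    linarith
  set A := fun ξ : Fin d → ℤ => st10W σ t ξ * (‖u₁ ξ‖₊ : ℝ≥0∞) with hA
  set B := fun ξ : Fin d → ℤ => st10W σ t ξ * (‖u₂ ξ‖₊ : ℝ≥0∞) with hB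
  set As := fun ξ : Fin d → ℤ => st10W σ s₀ ξ * (‖u₁ ξ‖₊ : ℝ≥0∞) with hAs
  set Bs := fun ξ : Fin d → ℤ => st10W σ s₀ ξ * (‖u₂ ξ‖₊ : ℝ≥0∞) with hBs
  set e₁ := fun ξ : Fin d → ℤ => st10E σ ξ * (‖u₁ ξ‖₊ : ℝ≥0∞) with he₁
  set e₂ := fun ξ : Fin d → ℤ => st10E σ ξ * (‖u₂ ξ‖₊ : ℝ≥0∞) with he₂
  have hsum_e₁ : ∑' ξ, e₁ ξ ≤ K ^ (1/2:ℝ) * (∑' ξ, As ξ ^ 2) ^ (1/2:ℝ) := by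
    have heq : ∀ ξ, e₁ ξ = ENNReal.ofReal (latJap ξ ^ (-s₀)) * As ξ := by
      intro ξ
      rw [he₁, hAs]
      show st10E σ ξ * _ = _
      rw [st10_e_eq σ s₀ ξ, mul_assoc]
    simp_rw [heq]
    exact st10_cs _ _
  have hsum_e₂ : ∑' ξ, e₂ ξ ≤ K ^ (1/2:ℝ) * (∑' ξ, Bs ξ ^ 2) ^ (1/2:ℝ) := by
    have heq : ∀ ξ, e₂ ξ = ENNReal.ofReal (latJap ξ ^ (-s₀)) * Bs ξ := by
      intro ξ
      rw [he₂, hBs]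
      show st10E σ ξ * _ = _
      rw [st10_e_eq σ s₀ ξ, mul_assoc]
    simp_rw [heq]
    exact st10_cs _ _
  have hpt : ∀ ξ, st10W σ t ξ * (‖conv u₁ u₂ ξ‖₊ : ℝ≥0∞)
      ≤ ENNReal.ofReal (2 ^ t)
        * ((∑' ζ, A (ξ - ζ) * e₂ ζ) + (∑' ζ, e₁ (ξ - ζ) * B ζ)) := by
    intro ξ
    have h0 : (‖conv u₁ u₂ ξ‖₊ : ℝ≥0∞)
        ≤ ∑' ζ, (‖u₁ (ξ - ζ)‖₊ : ℝ≥0∞) * (‖u₂ ζ‖₊ : ℝ≥0∞) := by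
      have h := st10_nnnorm_tsum (fun ζ => u₁ (ξ - ζ) * u₂ ζ)
      simpa [conv, nnnorm_mul, ENNReal.coe_mul] using h
    calc st10W σ t ξ * (‖conv u₁ u₂ ξ‖₊ : ℝ≥0∞)
        ≤ st10W σ t ξ * ∑' ζ, (‖u₁ (ξ - ζ)‖₊ : ℝ≥0∞) * (‖u₂ ζ‖₊ : ℝ≥0∞) :=
          mul_le_mul_right h0 _
      _ = ∑' ζ, st10W σ t ξ * ((‖u₁ (ξ - ζ)‖₊ : ℝ≥0∞) * (‖u₂ ζ‖₊ : ℝ≥0∞)) :=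
          ENNReal.tsum_mul_left.symm
      _ ≤ ∑' ζ, ENNReal.ofReal (2 ^ t) * (A (ξ - ζ) * e₂ ζ + e₁ (ξ - ζ) * B ζ) := by
          refine Summable.tsum_le_tsum (fun ζ => ?_) ENNReal.summable ENNReal.summable
          calc st10W σ t ξ * ((‖u₁ (ξ - ζ)‖₊ : ℝ≥0∞) * (‖u₂ ζ‖₊ : ℝ≥0∞))
              ≤ (ENNReal.ofReal (2 ^ t)
                  * (st10W σ t (ξ - ζ) * st10E σ ζ + st10E σ (ξ - ζ) * st10W σ t ζ))
                * ((‖u₁ (ξ - ζ)‖₊ : ℝ≥0∞) * (‖u₂ ζ‖₊ : ℝ≥0∞)) :=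
                mul_le_mul_left (st10_key hσ ht ξ ζ) _
            _ = ENNReal.ofReal (2 ^ t) * (A (ξ - ζ) * e₂ ζ + e₁ (ξ - ζ) * B ζ) := by
                rw [hA, hB, he₁, he₂]
                ring
      _ = ENNReal.ofReal (2 ^ t)
          * ((∑' ζ, A (ξ - ζ) * e₂ ζ) + (∑' ζ, e₁ (ξ - ζ) * B ζ)) := by
          rw [ENNReal.tsum_mul_left, ENNReal.tsum_add]
  -- ℓ² bounds for the two convolution pieces
  have hc₁ : (∑' ξ, (∑' ζ, A (ξ - ζ) * e₂ ζ) ^ 2) ^ (1/2:ℝ)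
      ≤ (∑' ξ, A ξ ^ 2) ^ (1/2:ℝ) * ∑' ξ, e₂ ξ := by
    calc (∑' ξ, (∑' ζ, A (ξ - ζ) * e₂ ζ) ^ 2) ^ (1/2:ℝ)
        ≤ ((∑' ξ, A ξ ^ 2) * (∑' ξ, e₂ ξ) ^ 2) ^ (1/2:ℝ) :=
          ENNReal.rpow_le_rpow (st10_young A e₂) (by norm_num)
      _ = (∑' ξ, A ξ ^ 2) ^ (1/2:ℝ) * ∑' ξ, e₂ ξ := by
          rw [ENNReal.mul_rpow_of_nonneg _ _ (by norm_num), st10_sqrt_sq]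
  have hcom : ∀ ξ, (∑' ζ, e₁ (ξ - ζ) * B ζ) = ∑' ζ, B (ξ - ζ) * e₁ ζ := by
    intro ξ
    rw [← (Equiv.subLeft ξ).tsum_eq (fun ζ => B (ξ - ζ) * e₁ ζ)]
    refine tsum_congr fun ζ => ?_
    simp only [Equiv.subLeft_apply, sub_sub_cancel]
    ring
  have hc₂ : (∑' ξ, (∑' ζ, e₁ (ξ - ζ) * B ζ) ^ 2) ^ (1/2:ℝ)
      ≤ (∑' ξ, B ξ ^ 2) ^ (1/2:ℝ) * ∑' ξ, e₁ ξ := by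
    simp_rw [hcom]
    calc (∑' ξ, (∑' ζ, B (ξ - ζ) * e₁ ζ) ^ 2) ^ (1/2:ℝ)
        ≤ ((∑' ξ, B ξ ^ 2) * (∑' ξ, e₁ ξ) ^ 2) ^ (1/2:ℝ) :=
          ENNReal.rpow_le_rpow (st10_young B e₁) (by norm_num)
      _ = (∑' ξ, B ξ ^ 2) ^ (1/2:ℝ) * ∑' ξ, e₁ ξ := by
          rw [ENNReal.mul_rpow_of_nonneg _ _ (by norm_num), st10_sqrt_sq]
  -- norms
  have hnA : (∑' ξ, A ξ ^ 2) ^ (1/2:ℝ) = hNorm σ t u₁ := by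
    unfold hNorm; rw [st10_hNormSq_eq]
  have hnB : (∑' ξ, B ξ ^ 2) ^ (1/2:ℝ) = hNorm σ t u₂ := by
    unfold hNorm; rw [st10_hNormSq_eq]
  have hnAs : (∑' ξ, As ξ ^ 2) ^ (1/2:ℝ) = hNorm σ s₀ u₁ := by
    unfold hNorm; rw [st10_hNormSq_eq]
  have hnBs : (∑' ξ, Bs ξ ^ 2) ^ (1/2:ℝ) = hNorm σ s₀ u₂ := by
    unfold hNorm; rw [st10_hNormSq_eq]
  -- main chain
  calc hNorm σ t (conv u₁ u₂)
      = (∑' ξ, (st10W σ t ξ * (‖conv u₁ u₂ ξ‖₊ : ℝ≥0∞)) ^ 2) ^ (1/2:ℝ) := by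
        unfold hNorm; rw [st10_hNormSq_eq]
    _ ≤ (∑' ξ, (ENNReal.ofReal (2 ^ t)
          * ((∑' ζ, A (ξ - ζ) * e₂ ζ) + (∑' ζ, e₁ (ξ - ζ) * B ζ))) ^ 2) ^ (1/2:ℝ) := by
        refine ENNReal.rpow_le_rpow ?_ (by norm_num)
        exact Summable.tsum_le_tsum (fun ξ => pow_le_pow_left₀ zero_le (hpt ξ) 2)
          ENNReal.summable ENNReal.summable
    _ = ENNReal.ofReal (2 ^ t)
        * (∑' ξ, ((∑' ζ, A (ξ - ζ) * e₂ ζ) + (∑' ζ, e₁ (ξ - ζ) * B ζ)) ^ 2) ^ (1/2:ℝ) := by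
        simp_rw [mul_pow]
        rw [ENNReal.tsum_mul_left, ENNReal.mul_rpow_of_nonneg _ _ (by norm_num), st10_sqrt_sq]
    _ ≤ ENNReal.ofReal (2 ^ t)
        * ((∑' ξ, (∑' ζ, A (ξ - ζ) * e₂ ζ) ^ 2) ^ (1/2:ℝ)
          + (∑' ξ, (∑' ζ, e₁ (ξ - ζ) * B ζ) ^ 2) ^ (1/2:ℝ)) :=
        mul_le_mul_right (st10_l2_add _ _) _
    _ ≤ ENNReal.ofReal (2 ^ t)
        * (((∑' ξ, A ξ ^ 2) ^ (1/2:ℝ) * ∑' ξ, e₂ ξ)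
          + ((∑' ξ, B ξ ^ 2) ^ (1/2:ℝ) * ∑' ξ, e₁ ξ)) :=
        mul_le_mul_right (add_le_add hc₁ hc₂) _
    _ ≤ ENNReal.ofReal (2 ^ t)
        * ((hNorm σ t u₁ * (K ^ (1/2:ℝ) * hNorm σ s₀ u₂))
          + (hNorm σ t u₂ * (K ^ (1/2:ℝ) * hNorm σ s₀ u₁))) := by
        rw [hnA, hnB]
        refine mul_le_mul_right (add_le_add ?_ ?_) _
        · refine mul_le_mul_right ?_ _
          rw [← hnBs]
          exact hsum_e₂
        · refine mul_le_mul_right ?_ _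
          rw [← hnAs]
          exact hsum_e₁
    _ = (ENNReal.ofReal (2 ^ t) * K ^ (1/2:ℝ)) * (hNorm σ s₀ u₂ * hNorm σ t u₁)
        + (ENNReal.ofReal (2 ^ t) * K ^ (1/2:ℝ)) * (hNorm σ s₀ u₁ * hNorm σ t u₂) := by
        ring
    _ ≤ ENNReal.ofReal C * (hNorm σ s₀ u₂ * hNorm σ t u₁)
        + ENNReal.ofReal C * (hNorm σ s₀ u₁ * hNorm σ t u₂) :=
        add_le_add (mul_le_mul_left hCmain _) (mul_le_mul_left hCmain _)
    _ = ENNReal.ofReal C * hNorm σ s₀ u₁ * hNorm σ t u₂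
        + ENNReal.ofReal C * hNorm σ s₀ u₂ * hNorm σ t u₁ := by
        ring
end

section
/- Let s₀ > d/2, s ≥ 0, M₀ > 0, and let f be holomorphic on {z ∈ C : |z| < M₀} with f(0) = 0 and Taylor coefficients aₙ satisfying |aₙ| ≤ K^n for some K > 0. Then there exists ε₀ > 0 and C > 0 (depending only on f, s, s₀, ε₀, d) such that for all σ > 0 and all u ∈ H^{σ,s} ∩ H^{σ,s₀} with ‖u‖_{H^{σ,s₀}} ≤ ε₀, the composition f(u) belongs to H^{σ,s} and ‖f(u)‖_{H^{σ,s}} ≤ C ‖u‖_{H^{σ,s}}. -/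
open scoped ENNReal BigOperators

/-- Iterated convolution powers, representing the pointwise powers `uⁿ`
(`u⁰ = 1` corresponds to the Dirac mass at frequency `0`). -/
noncomputable def convPow {d : ℕ} (c : (Fin d → ℤ) → ℂ) : ℕ → ((Fin d → ℤ) → ℂ)
  | 0 => fun ξ => if ξ = 0 then 1 else 0
  | n + 1 => conv (convPow c n) c


open MeasureTheory

namespace St11
variable {d : ℕ}

noncomputable def emb {d : ℕ} (x : Fin d → ℤ) : EuclideanSpace ℝ (Fin d) :=
  WithLp.toLp 2 (fun i => (x i : ℝ))

lemma emb_add (x y : Fin d → ℤ) : emb (x + y) = emb x + emb y := by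
  ext i
  show ((x i + y i : ℤ) : ℝ) = _
  push_cast
  rfl

lemma norm_emb (x : Fin d → ℤ) : ‖emb x‖ = latNorm x := by
  rw [EuclideanSpace.norm_eq, latNorm]
  congr 1
  refine Finset.sum_congr rfl fun i _ => ?_
  simp [emb, Real.norm_eq_abs, sq_abs]

lemma latNorm_nonneg (x : Fin d → ℤ) : 0 ≤ latNorm x := Real.sqrt_nonneg _

lemma latNorm_triangle (x y : Fin d → ℤ) : latNorm (x + y) ≤ latNorm x + latNorm y := by
  rw [← norm_emb, ← norm_emb, ← norm_emb, emb_add]; exact norm_add_le _ _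

noncomputable def embJ {d : ℕ} (x : Fin d → ℤ) (t : ℝ) : EuclideanSpace ℝ (Fin (d + 1)) :=
  WithLp.toLp 2 (fun i => (Fin.snoc (fun j => (x j : ℝ)) t : Fin (d + 1) → ℝ) i)

lemma norm_embJ (x : Fin d → ℤ) (t : ℝ) :
    ‖embJ x t‖ = Real.sqrt (t ^ 2 + ∑ i, ((x i : ℝ)) ^ 2) := by
  rw [EuclideanSpace.norm_eq]
  congr 1
  have h : ∀ i : Fin (d+1), ‖embJ x t i‖ ^ 2 = (embJ x t i) ^ 2 := by
    intro i; rw [Real.norm_eq_abs, sq_abs]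
  simp_rw [h]
  rw [Fin.sum_univ_castSucc]
  simp [embJ, add_comm]

lemma embJ_add (x y : Fin d → ℤ) (t u : ℝ) :
    embJ (x + y) (t + u) = embJ x t + embJ y u := by
  ext i
  show (Fin.snoc (fun j => ((x + y) j : ℝ)) (t + u) : Fin (d + 1) → ℝ) i
      = (Fin.snoc (fun j => (x j : ℝ)) t : Fin (d + 1) → ℝ) i
      + (Fin.snoc (fun j => (y j : ℝ)) u : Fin (d + 1) → ℝ) i
  refine Fin.lastCases ?_ ?_ i
  · simp
  · intro j; simp only [Fin.snoc_castSucc, Pi.add_apply]; push_cast; ring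

lemma latJap_eq (x : Fin d → ℤ) : latJap x = ‖embJ x 1‖ := by
  rw [norm_embJ, latJap]; norm_num

lemma latNorm_eq' (x : Fin d → ℤ) : latNorm x = ‖embJ x 0‖ := by
  rw [norm_embJ, latNorm]; norm_num

lemma sum_sq_nonneg (x : Fin d → ℤ) : 0 ≤ ∑ i, ((x i : ℝ)) ^ 2 :=
  Finset.sum_nonneg fun i _ => sq_nonneg _

lemma one_le_latJap (x : Fin d → ℤ) : 1 ≤ latJap x := by
  rw [latJap]
  calc (1:ℝ) = Real.sqrt 1 := Real.sqrt_one.symm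
  _ ≤ _ := Real.sqrt_le_sqrt (by linarith [sum_sq_nonneg x])

lemma latJap_pos (x : Fin d → ℤ) : 0 < latJap x := lt_of_lt_of_le one_pos (one_le_latJap x)

lemma latNorm_le_latJap (x : Fin d → ℤ) : latNorm x ≤ latJap x := by
  apply Real.sqrt_le_sqrt
  linarith [sum_sq_nonneg x]

lemma latJap_triangle (x y : Fin d → ℤ) : latJap (x + y) ≤ latJap x + latNorm y := by
  rw [latJap_eq, latJap_eq, latNorm_eq']
  rw [show embJ (x + y) (1:ℝ) = embJ x 1 + embJ y 0 by rw [← embJ_add]; norm_num]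
  exact norm_add_le _ _

end St11

namespace St11
variable {d : ℕ}

noncomputable def l2 {d : ℕ} (F : (Fin d → ℤ) → ℝ≥0∞) : ℝ≥0∞ :=
  (∑' ξ, F ξ ^ 2) ^ (1/2 : ℝ)

lemma sq_rpow_half (x : ℝ≥0∞) : (x ^ 2) ^ (1/2 : ℝ) = x := by
  rw [← ENNReal.rpow_two, ← ENNReal.rpow_mul]
  norm_num

lemma l2_sq {d : ℕ} (F : (Fin d → ℤ) → ℝ≥0∞) : l2 F ^ 2 = ∑' ξ, F ξ ^ 2 := by
  rw [l2, ← ENNReal.rpow_two, ← ENNReal.rpow_mul]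
  norm_num

lemma l2_mono {F H : (Fin d → ℤ) → ℝ≥0∞} (h : ∀ ξ, F ξ ≤ H ξ) : l2 F ≤ l2 H := by
  apply ENNReal.rpow_le_rpow _ (by norm_num)
  exact ENNReal.tsum_le_tsum fun ξ => pow_le_pow_left' (h ξ) 2

lemma l2_const_mul (a : ℝ≥0∞) (F : (Fin d → ℤ) → ℝ≥0∞) :
    l2 (fun ξ => a * F ξ) = a * l2 F := by
  rw [l2, l2]
  simp_rw [mul_pow, ENNReal.tsum_mul_left]
  rw [ENNReal.mul_rpow_of_nonneg _ _ (by norm_num), sq_rpow_half]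

lemma tsum_mul_le_l2_mul_l2 (F H : (Fin d → ℤ) → ℝ≥0∞) :
    ∑' ξ, F ξ * H ξ ≤ l2 F * l2 H := by
  rw [← lintegral_count, l2, l2]
  simp_rw [← ENNReal.rpow_two, ← lintegral_count]
  have := ENNReal.lintegral_mul_le_Lp_mul_Lq (Measure.count : Measure (Fin d → ℤ))
    Real.HolderConjugate.two_two
    (measurable_of_countable F).aemeasurable (measurable_of_countable H).aemeasurable
  simpa using this

lemma l2_add_le (F H : (Fin d → ℤ) → ℝ≥0∞) :
    l2 (fun ξ => F ξ + H ξ) ≤ l2 F + l2 H := by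
  have := ENNReal.lintegral_Lp_add_le (p := 2) (μ := (Measure.count : Measure (Fin d → ℤ)))
    (measurable_of_countable F).aemeasurable (measurable_of_countable H).aemeasurable
    (by norm_num)
  simp_rw [lintegral_count, Pi.add_apply, ENNReal.rpow_two] at this
  simpa [l2] using this

lemma l2_finsum_le (F : ℕ → (Fin d → ℤ) → ℝ≥0∞) (N : ℕ) :
    l2 (fun ξ => ∑ n ∈ Finset.range N, F n ξ) ≤ ∑ n ∈ Finset.range N, l2 (F n) := by
  induction N with
  | zero => simp [l2]
  | succ N ih =>
    simp_rw [Finset.sum_range_succ]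
    exact le_trans (l2_add_le _ _) (add_le_add ih le_rfl)

lemma l2_tsum_le (F : ℕ → (Fin d → ℤ) → ℝ≥0∞) :
    l2 (fun ξ => ∑' n, F n ξ) ≤ ∑' n, l2 (F n) := by
  have key : ∀ ξ, (∑' n, F n ξ) = ⨆ N, ∑ n ∈ Finset.range N, F n ξ :=
    fun ξ => ENNReal.tsum_eq_iSup_nat
  have hmono : ∀ ξ, Monotone (fun N => ∑ n ∈ Finset.range N, F n ξ) := by
    intro ξ
    exact fun N M h => Finset.sum_le_sum_of_subset (Finset.range_subset_range.2 h)
  have hsq : ∀ ξ, (∑' n, F n ξ) ^ 2 = ⨆ N, (∑ n ∈ Finset.range N, F n ξ) ^ 2 := by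
    intro ξ
    rw [key ξ]
    apply le_antisymm
    · rw [sq, ENNReal.iSup_mul]
      apply iSup_le; intro N
      rw [ENNReal.mul_iSup]
      apply iSup_le; intro M
      calc (∑ n ∈ Finset.range N, F n ξ) * ∑ n ∈ Finset.range M, F n ξ
          ≤ (∑ n ∈ Finset.range (max N M), F n ξ) * ∑ n ∈ Finset.range (max N M), F n ξ :=
            mul_le_mul' (hmono ξ (le_max_left _ _)) (hmono ξ (le_max_right _ _))
        _ ≤ ⨆ N, (∑ n ∈ Finset.range N, F n ξ) ^ 2 := by
            rw [← sq]; exact le_iSup (fun N => (∑ n ∈ Finset.range N, F n ξ) ^ 2) _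
    · exact iSup_le fun N => pow_le_pow_left' (le_iSup (fun N => ∑ n ∈ Finset.range N, F n ξ) N) 2
  have hswap : (∑' ξ, (∑' n, F n ξ) ^ 2)
      = ⨆ N, ∑' ξ, (∑ n ∈ Finset.range N, F n ξ) ^ 2 := by
    simp_rw [hsq]
    rw [← lintegral_count]
    rw [lintegral_iSup (fun N => measurable_of_countable _)
      (fun N M h => fun ξ => pow_le_pow_left' (hmono ξ h) 2)]
    simp_rw [lintegral_count]
  have : l2 (fun ξ => ∑' n, F n ξ) ^ 2 ≤ (∑' n, l2 (F n)) ^ 2 := by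
    rw [l2_sq, hswap]
    apply iSup_le; intro N
    calc ∑' ξ, (∑ n ∈ Finset.range N, F n ξ) ^ 2
        = l2 (fun ξ => ∑ n ∈ Finset.range N, F n ξ) ^ 2 := (l2_sq _).symm
      _ ≤ (∑ n ∈ Finset.range N, l2 (F n)) ^ 2 := pow_le_pow_left' (l2_finsum_le F N) 2
      _ ≤ (∑' n, l2 (F n)) ^ 2 := pow_le_pow_left' (ENNReal.sum_le_tsum _) 2
  calc l2 (fun ξ => ∑' n, F n ξ)
      = (l2 (fun ξ => ∑' n, F n ξ) ^ 2) ^ (1/2:ℝ) := (sq_rpow_half _).symm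
    _ ≤ ((∑' n, l2 (F n)) ^ 2) ^ (1/2:ℝ) := ENNReal.rpow_le_rpow this (by norm_num)
    _ = ∑' n, l2 (F n) := sq_rpow_half _

end St11

namespace St11
variable {d : ℕ}

lemma rpow_half_sq (x : ℝ≥0∞) : (x ^ (1/2:ℝ)) ^ 2 = x := by
  rw [← ENNReal.rpow_two, ← ENNReal.rpow_mul]
  norm_num

lemma l2_conv_le (F H : (Fin d → ℤ) → ℝ≥0∞) :
    l2 (fun ξ => ∑' ζ, F (ξ - ζ) * H ζ) ≤ l2 F * ∑' ζ, H ζ := by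
  have pointwise : ∀ ξ, (∑' ζ, F (ξ - ζ) * H ζ) ^ 2
      ≤ (∑' ζ, F (ξ - ζ) ^ 2 * H ζ) * ∑' ζ, H ζ := by
    intro ξ
    have cs : (∑' ζ, F (ξ - ζ) * H ζ)
        ≤ (∑' ζ, F (ξ - ζ) ^ 2 * H ζ) ^ (1/2:ℝ) * (∑' ζ, H ζ) ^ (1/2:ℝ) := by
      have h1 : ∀ ζ, F (ξ - ζ) * H ζ
          = (F (ξ - ζ) * H ζ ^ (1/2:ℝ)) * (H ζ ^ (1/2:ℝ)) := by
        intro ζ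
        rw [mul_assoc, ← sq, rpow_half_sq]
      calc ∑' ζ, F (ξ - ζ) * H ζ
          ≤ l2 (fun ζ => F (ξ - ζ) * H ζ ^ (1/2:ℝ)) * l2 (fun ζ => H ζ ^ (1/2:ℝ)) := by
            simpa [h1] using tsum_mul_le_l2_mul_l2 (fun ζ => F (ξ - ζ) * H ζ ^ (1/2:ℝ))
              (fun ζ => H ζ ^ (1/2:ℝ))
        _ = (∑' ζ, F (ξ - ζ) ^ 2 * H ζ) ^ (1/2:ℝ) * (∑' ζ, H ζ) ^ (1/2:ℝ) := by
            rw [l2, l2]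
            simp_rw [mul_pow, rpow_half_sq]
    calc (∑' ζ, F (ξ - ζ) * H ζ) ^ 2
        ≤ ((∑' ζ, F (ξ - ζ) ^ 2 * H ζ) ^ (1/2:ℝ) * (∑' ζ, H ζ) ^ (1/2:ℝ)) ^ 2 :=
          pow_le_pow_left' cs 2
      _ = (∑' ζ, F (ξ - ζ) ^ 2 * H ζ) * ∑' ζ, H ζ := by
          rw [mul_pow, rpow_half_sq, rpow_half_sq]
  have sum_bound : (∑' ξ, (∑' ζ, F (ξ - ζ) * H ζ) ^ 2)
      ≤ (∑' ξ, F ξ ^ 2) * (∑' ζ, H ζ) ^ 2 := by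
    calc (∑' ξ, (∑' ζ, F (ξ - ζ) * H ζ) ^ 2)
        ≤ ∑' ξ, (∑' ζ, F (ξ - ζ) ^ 2 * H ζ) * ∑' ζ, H ζ :=
          ENNReal.tsum_le_tsum pointwise
      _ = (∑' ξ, ∑' ζ, F (ξ - ζ) ^ 2 * H ζ) * ∑' ζ, H ζ := by
          rw [ENNReal.tsum_mul_right]
      _ = (∑' ζ, ∑' ξ, F (ξ - ζ) ^ 2 * H ζ) * ∑' ζ, H ζ := by
          rw [ENNReal.tsum_comm]
      _ = (∑' ζ, (∑' ξ, F (ξ - ζ) ^ 2) * H ζ) * ∑' ζ, H ζ := by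
          congr 1
          exact tsum_congr fun ζ => ENNReal.tsum_mul_right
      _ = (∑' ξ, F ξ ^ 2) * (∑' ζ, H ζ) ^ 2 := by
          have ht : ∀ ζ : Fin d → ℤ, (∑' ξ, F (ξ - ζ) ^ 2) = ∑' ξ, F ξ ^ 2 := by
            intro ζ
            exact (Equiv.subRight ζ).tsum_eq (fun ξ => F ξ ^ 2)
          simp_rw [ht]
          rw [ENNReal.tsum_mul_left, sq]
          ring
  calc l2 (fun ξ => ∑' ζ, F (ξ - ζ) * H ζ)
      ≤ ((∑' ξ, F ξ ^ 2) * (∑' ζ, H ζ) ^ 2) ^ (1/2:ℝ) :=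
        ENNReal.rpow_le_rpow sum_bound (by norm_num)
    _ = l2 F * ∑' ζ, H ζ := by
        rw [ENNReal.mul_rpow_of_nonneg _ _ (by norm_num), sq_rpow_half, l2]

end St11

namespace St11
variable {d : ℕ}

/-! ### Weights -/

noncomputable def whR (σ s : ℝ) (ξ : Fin d → ℤ) : ℝ :=
  Real.exp (σ * latNorm ξ) * latJap ξ ^ s

lemma whR_pos (σ s : ℝ) (ξ : Fin d → ℤ) : 0 < whR σ s ξ :=
  mul_pos (Real.exp_pos _) (Real.rpow_pos_of_pos (latJap_pos ξ) s)

lemma whR_zero (σ : ℝ) (ξ : Fin d → ℤ) : whR σ 0 ξ = Real.exp (σ * latNorm ξ) := by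
  rw [whR, Real.rpow_zero, mul_one]

lemma two_rpow_pos (s : ℝ) : (0:ℝ) < 2 ^ s := Real.rpow_pos_of_pos (by norm_num) s

lemma rpow_add_le (s : ℝ) (hs : 0 ≤ s) {a b : ℝ} (ha : 0 < a) (hb : 0 < b) :
    (a + b) ^ s ≤ 2 ^ s * (a ^ s + b ^ s) := by
  have h1 : a + b ≤ 2 * max a b := by
    rcases max_cases a b with ⟨h, h'⟩ | ⟨h, h'⟩ <;> rw [h] <;> linarith
  calc (a + b) ^ s ≤ (2 * max a b) ^ s :=
        Real.rpow_le_rpow (by linarith) h1 hs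
    _ = 2 ^ s * (max a b) ^ s := Real.mul_rpow (by norm_num) (by positivity)
    _ ≤ 2 ^ s * (a ^ s + b ^ s) := by
        apply mul_le_mul_of_nonneg_left _ (two_rpow_pos s).le
        rcases max_cases a b with ⟨h, _⟩ | ⟨h, _⟩ <;> rw [h] <;>
          [skip; skip] <;> nlinarith [Real.rpow_nonneg ha.le s, Real.rpow_nonneg hb.le s,
            Real.rpow_pos_of_pos ha s, Real.rpow_pos_of_pos hb s]

lemma whR_key (σ s : ℝ) (hσ : 0 ≤ σ) (hs : 0 ≤ s) (ξ ζ : Fin d → ℤ) :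
    whR σ s ξ ≤ 2 ^ s * (whR σ s (ξ - ζ) * whR σ 0 ζ + whR σ 0 (ξ - ζ) * whR σ s ζ) := by
  have hxi : (ξ - ζ) + ζ = ξ := by abel
  have h1 : latNorm ξ ≤ latNorm (ξ - ζ) + latNorm ζ := by
    conv_lhs => rw [← hxi]
    exact latNorm_triangle _ _
  have hexp : Real.exp (σ * latNorm ξ)
      ≤ Real.exp (σ * latNorm (ξ - ζ)) * Real.exp (σ * latNorm ζ) := by
    rw [← Real.exp_add]
    apply Real.exp_le_exp.2
    nlinarith
  have h2 : latJap ξ ≤ latJap (ξ - ζ) + latJap ζ := by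
    conv_lhs => rw [← hxi]
    exact le_trans (latJap_triangle _ _) (by linarith [latNorm_le_latJap ζ])
  have hjap : latJap ξ ^ s ≤ 2 ^ s * (latJap (ξ - ζ) ^ s + latJap ζ ^ s) := by
    calc latJap ξ ^ s ≤ (latJap (ξ - ζ) + latJap ζ) ^ s :=
          Real.rpow_le_rpow (latJap_pos ξ).le h2 hs
      _ ≤ _ := rpow_add_le s hs (latJap_pos _) (latJap_pos _)
  calc whR σ s ξ = Real.exp (σ * latNorm ξ) * latJap ξ ^ s := rfl
    _ ≤ (Real.exp (σ * latNorm (ξ - ζ)) * Real.exp (σ * latNorm ζ))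
        * (2 ^ s * (latJap (ξ - ζ) ^ s + latJap ζ ^ s)) := by
        apply mul_le_mul hexp hjap (Real.rpow_nonneg (latJap_pos ξ).le s)
          (by positivity)
    _ = 2 ^ s * (whR σ s (ξ - ζ) * whR σ 0 ζ + whR σ 0 (ξ - ζ) * whR σ s ζ) := by
        simp only [whR, Real.rpow_zero, mul_one]
        ring

noncomputable def wh (σ s : ℝ) (ξ : Fin d → ℤ) : ℝ≥0∞ :=
  ENNReal.ofReal (whR σ s ξ)

lemma hWeight_eq (σ s : ℝ) (ξ : Fin d → ℤ) : hWeight σ s ξ = wh σ s ξ ^ 2 := by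
  rw [hWeight, wh, ← ENNReal.ofReal_pow (whR_pos σ s ξ).le]
  congr 1
  have hexp : Real.exp (2 * σ * latNorm ξ) = Real.exp (σ * latNorm ξ) ^ 2 := by
    rw [show 2 * σ * latNorm ξ = ((2:ℕ):ℝ) * (σ * latNorm ξ) by push_cast; ring,
      Real.exp_nat_mul]
  have hjap : latJap ξ ^ (2 * s) = (latJap ξ ^ s) ^ 2 := by
    rw [mul_comm (2:ℝ) s, Real.rpow_mul (latJap_pos ξ).le, Real.rpow_two]
  rw [whR, hexp, hjap]
  ring

lemma wh_key (σ s : ℝ) (hσ : 0 ≤ σ) (hs : 0 ≤ s) (ξ ζ : Fin d → ℤ) :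
    wh σ s ξ ≤ ENNReal.ofReal (2 ^ s)
      * (wh σ s (ξ - ζ) * wh σ 0 ζ + wh σ 0 (ξ - ζ) * wh σ s ζ) := by
  rw [wh, wh, wh, wh, wh, ← ENNReal.ofReal_mul (whR_pos _ _ _).le,
    ← ENNReal.ofReal_mul (whR_pos _ _ _).le, ← ENNReal.ofReal_add (mul_nonneg (whR_pos _ _ _).le (whR_pos _ _ _).le) (mul_nonneg (whR_pos _ _ _).le (whR_pos _ _ _).le),
    ← ENNReal.ofReal_mul (two_rpow_pos s).le]
  exact ENNReal.ofReal_le_ofReal (whR_key σ s hσ hs ξ ζ)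

/-! ### Norms as `l2` of weighted coefficients -/

noncomputable def Nc (σ s : ℝ) (c : (Fin d → ℤ) → ℂ) : (Fin d → ℤ) → ℝ≥0∞ :=
  fun ξ => wh σ s ξ * (‖c ξ‖₊ : ℝ≥0∞)

lemma hNorm_eq (σ s : ℝ) (c : (Fin d → ℤ) → ℂ) : hNorm σ s c = l2 (Nc σ s c) := by
  rw [hNorm, hNormSq, l2]
  congr 1
  exact tsum_congr fun ξ => by rw [Nc, mul_pow, hWeight_eq]

lemma ennnorm_tsum_le {ι : Type*} (f : ι → ℂ) :
    (‖∑' i, f i‖₊ : ℝ≥0∞) ≤ ∑' i, (‖f i‖₊ : ℝ≥0∞) := by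
  by_cases h : Summable fun i => ‖f i‖₊
  · rw [← ENNReal.coe_tsum h]
    exact_mod_cast nnnorm_tsum_le h
  · have : (∑' i, (‖f i‖₊ : ℝ≥0∞)) = ⊤ := by
      by_contra h'
      exact h (ENNReal.tsum_coe_ne_top_iff_summable.1 h')
    rw [this]
    exact le_top

end St11

namespace St11
variable {d : ℕ}

/-- `ℓ¹`-type norm with exponential weight only. -/
noncomputable def L1 (σ : ℝ) (c : (Fin d → ℤ) → ℂ) : ℝ≥0∞ :=
  ∑' ζ, wh σ 0 ζ * (‖c ζ‖₊ : ℝ≥0∞)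

lemma l2_conv_le' (F H : (Fin d → ℤ) → ℝ≥0∞) :
    l2 (fun ξ => ∑' ζ, H (ξ - ζ) * F ζ) ≤ l2 F * ∑' ζ, H ζ := by
  have swap : ∀ ξ : Fin d → ℤ, (∑' ζ, H (ξ - ζ) * F ζ) = ∑' ζ, F (ξ - ζ) * H ζ := by
    intro ξ
    rw [← (Equiv.subLeft ξ).tsum_eq (fun ζ => F (ξ - ζ) * H ζ)]
    apply tsum_congr
    intro ζ
    simp only [Equiv.subLeft_apply, sub_sub_cancel]
    ring
  simp_rw [swap]
  exact l2_conv_le F H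

/-- The tame product estimate. -/
lemma tame (σ s : ℝ) (hσ : 0 ≤ σ) (hs : 0 ≤ s) (f g : (Fin d → ℤ) → ℂ) :
    l2 (Nc σ s (conv f g)) ≤ ENNReal.ofReal (2 ^ s) *
      (l2 (Nc σ s f) * L1 σ g + L1 σ f * l2 (Nc σ s g)) := by
  have pointwise : ∀ ξ, Nc σ s (conv f g) ξ
      ≤ ENNReal.ofReal (2 ^ s) *
        ((∑' ζ, Nc σ s f (ξ - ζ) * (wh σ 0 ζ * ‖g ζ‖₊))
          + ∑' ζ, Nc σ s g (ξ - ζ) * (wh σ 0 ζ * ‖f ζ‖₊)) := by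
    intro ξ
    have step1 : Nc σ s (conv f g) ξ ≤ ∑' ζ, wh σ s ξ * (‖f (ξ - ζ)‖₊ * ‖g ζ‖₊ : ℝ≥0∞) := by
      rw [Nc, conv, ENNReal.tsum_mul_left]
      apply mul_le_mul' le_rfl
      calc (‖∑' ζ, f (ξ - ζ) * g ζ‖₊ : ℝ≥0∞) ≤ ∑' ζ, (‖f (ξ - ζ) * g ζ‖₊ : ℝ≥0∞) :=
            ennnorm_tsum_le _
        _ = ∑' ζ, (‖f (ξ - ζ)‖₊ * ‖g ζ‖₊ : ℝ≥0∞) := by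
            apply tsum_congr; intro ζ; rw [nnnorm_mul, ENNReal.coe_mul]
    have step2 : ∀ ζ, wh σ s ξ * (‖f (ξ - ζ)‖₊ * ‖g ζ‖₊ : ℝ≥0∞)
        ≤ ENNReal.ofReal (2 ^ s) *
          (Nc σ s f (ξ - ζ) * (wh σ 0 ζ * ‖g ζ‖₊) + Nc σ s g ζ * (wh σ 0 (ξ - ζ) * ‖f (ξ - ζ)‖₊)) := by
      intro ζ
      calc wh σ s ξ * (‖f (ξ - ζ)‖₊ * ‖g ζ‖₊ : ℝ≥0∞)
          ≤ (ENNReal.ofReal (2 ^ s)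
              * (wh σ s (ξ - ζ) * wh σ 0 ζ + wh σ 0 (ξ - ζ) * wh σ s ζ))
            * (‖f (ξ - ζ)‖₊ * ‖g ζ‖₊ : ℝ≥0∞) :=
            mul_le_mul' (wh_key σ s hσ hs ξ ζ) le_rfl
        _ = ENNReal.ofReal (2 ^ s) *
            (Nc σ s f (ξ - ζ) * (wh σ 0 ζ * ‖g ζ‖₊) + Nc σ s g ζ * (wh σ 0 (ξ - ζ) * ‖f (ξ - ζ)‖₊)) := by
            rw [Nc, Nc]
            ring
    calc Nc σ s (conv f g) ξ
        ≤ ∑' ζ, wh σ s ξ * (‖f (ξ - ζ)‖₊ * ‖g ζ‖₊ : ℝ≥0∞) := step1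
      _ ≤ ∑' ζ, ENNReal.ofReal (2 ^ s) *
          (Nc σ s f (ξ - ζ) * (wh σ 0 ζ * ‖g ζ‖₊)
            + Nc σ s g ζ * (wh σ 0 (ξ - ζ) * ‖f (ξ - ζ)‖₊)) :=
          ENNReal.tsum_le_tsum step2
      _ = ENNReal.ofReal (2 ^ s) *
          ((∑' ζ, Nc σ s f (ξ - ζ) * (wh σ 0 ζ * ‖g ζ‖₊))
            + ∑' ζ, Nc σ s g ζ * (wh σ 0 (ξ - ζ) * ‖f (ξ - ζ)‖₊)) := by
          rw [ENNReal.tsum_mul_left, ENNReal.tsum_add]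
      _ = ENNReal.ofReal (2 ^ s) *
          ((∑' ζ, Nc σ s f (ξ - ζ) * (wh σ 0 ζ * ‖g ζ‖₊))
            + ∑' ζ, Nc σ s g (ξ - ζ) * (wh σ 0 ζ * ‖f ζ‖₊)) := by
          congr 2
          rw [← (Equiv.subLeft ξ).tsum_eq
            (fun ζ => Nc σ s g (ξ - ζ) * (wh σ 0 ζ * ‖f ζ‖₊))]
          apply tsum_congr
          intro ζ
          simp only [Equiv.subLeft_apply, sub_sub_cancel]
  calc l2 (Nc σ s (conv f g))
      ≤ l2 (fun ξ => ENNReal.ofReal (2 ^ s) *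
          ((∑' ζ, Nc σ s f (ξ - ζ) * (wh σ 0 ζ * ‖g ζ‖₊))
            + ∑' ζ, Nc σ s g (ξ - ζ) * (wh σ 0 ζ * ‖f ζ‖₊))) := l2_mono pointwise
    _ = ENNReal.ofReal (2 ^ s) * l2 (fun ξ =>
          (∑' ζ, Nc σ s f (ξ - ζ) * (wh σ 0 ζ * ‖g ζ‖₊))
            + ∑' ζ, Nc σ s g (ξ - ζ) * (wh σ 0 ζ * ‖f ζ‖₊)) := l2_const_mul _ _
    _ ≤ ENNReal.ofReal (2 ^ s) *
          (l2 (fun ξ => ∑' ζ, Nc σ s f (ξ - ζ) * (wh σ 0 ζ * ‖g ζ‖₊))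
            + l2 (fun ξ => ∑' ζ, Nc σ s g (ξ - ζ) * (wh σ 0 ζ * ‖f ζ‖₊))) :=
        mul_le_mul' le_rfl (l2_add_le _ _)
    _ ≤ ENNReal.ofReal (2 ^ s) *
          (l2 (Nc σ s f) * L1 σ g + L1 σ f * l2 (Nc σ s g)) := by
        apply mul_le_mul' le_rfl
        apply add_le_add
        · exact l2_conv_le _ _
        · rw [mul_comm (L1 σ f)]
          exact l2_conv_le _ _

/-- Cauchy–Schwarz control of the weighted `ℓ¹` norm by the `H^{σ,s₀}` norm. -/
lemma L1_le (σ s₀ : ℝ) (g : (Fin d → ℤ) → ℂ) :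
    L1 σ g ≤ (∑' ζ : Fin d → ℤ, ENNReal.ofReal (latJap ζ ^ (-s₀)) ^ 2) ^ (1/2:ℝ)
      * l2 (Nc σ s₀ g) := by
  have key : ∀ ζ : Fin d → ℤ, wh σ 0 ζ * (‖g ζ‖₊ : ℝ≥0∞)
      = ENNReal.ofReal (latJap ζ ^ (-s₀)) * Nc σ s₀ g ζ := by
    intro ζ
    rw [Nc, ← mul_assoc, wh, wh, ← ENNReal.ofReal_mul (Real.rpow_nonneg (latJap_pos ζ).le _)]
    congr 2
    rw [whR_zero, whR, ← mul_assoc, mul_comm (latJap ζ ^ (-s₀)), mul_assoc,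
      ← Real.rpow_add (latJap_pos ζ)]
    simp
  rw [L1]
  simp_rw [key]
  exact tsum_mul_le_l2_mul_l2 _ _

end St11

namespace St11
variable {d : ℕ}

lemma one_add_sum_le_prod {ι : Type*} (t : Finset ι) (x : ι → ℝ) (hx : ∀ i, 0 ≤ x i) :
    1 + ∑ i ∈ t, x i ≤ ∏ i ∈ t, (1 + x i) := by
  classical
  induction t using Finset.induction_on with
  | empty => simp
  | insert _ _ hnot ih =>
    rename_i a t'
    rw [Finset.sum_insert hnot, Finset.prod_insert hnot]
    have hprod : (0:ℝ) ≤ ∏ i ∈ t', (1 + x i) :=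
      Finset.prod_nonneg fun i _ => by linarith [hx i]
    nlinarith [hx a, Finset.sum_nonneg (fun i (_ : i ∈ t') => hx i)]

lemma tsum_pi_prod (d : ℕ) (h : ℤ → ℝ≥0∞) :
    ∑' ζ : Fin d → ℤ, ∏ i, h (ζ i) = (∑' m : ℤ, h m) ^ d := by
  induction d with
  | zero =>
    rw [pow_zero]
    rw [show (fun ζ : Fin 0 → ℤ => ∏ i, h (ζ i)) = fun _ => 1 by
      funext ζ; simp]
    exact tsum_eq_single (fun i => (0:ℤ)) (fun b hb =>
      absurd (Subsingleton.elim b _) hb) |>.trans rfl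
  | succ n ih =>
    rw [← (Fin.consEquiv (fun _ : Fin (n+1) => ℤ)).tsum_eq
      (fun ζ : Fin (n+1) → ℤ => ∏ i, h (ζ i))]
    rw [ENNReal.tsum_prod']
    have : ∀ (m : ℤ) (ζ : Fin n → ℤ),
        (∏ i : Fin (n+1), h ((Fin.consEquiv (fun _ : Fin (n+1) => ℤ)) (m, ζ) i))
          = h m * ∏ i : Fin n, h (ζ i) := by
      intro m ζ
      rw [Fin.prod_univ_succ]
      simp [Fin.consEquiv]
    simp_rw [this]
    simp_rw [ENNReal.tsum_mul_left]
    rw [ENNReal.tsum_mul_right, ih, pow_succ]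
    ring

lemma int_sum_ne_top {t : ℝ} (ht : 1/2 < t) :
    (∑' m : ℤ, ENNReal.ofReal ((1 + (m:ℝ)^2) ^ (-t))) ≠ ⊤ := by
  have hpos : ∀ m : ℤ, (0:ℝ) < 1 + (m:ℝ)^2 := fun m => by positivity
  set g : ℤ → ℝ := fun m => (1 + (m:ℝ)^2) ^ (-t) with hg
  have hgnn : ∀ m, 0 ≤ g m := fun m => Real.rpow_nonneg (hpos m).le _
  have hsum : Summable g := by
    have hb : Summable (fun m : ℤ => (if m = 0 then (1:ℝ) else 0) + |(m:ℝ)| ^ (-(2*t))) := by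
      apply Summable.add
      · apply summable_of_ne_finset_zero (s := {(0:ℤ)})
        intro m hm
        simp only [Finset.mem_singleton] at hm
        simp [hm]
      · exact Real.summable_abs_int_rpow (by linarith)
    apply Summable.of_nonneg_of_le hgnn _ hb
    intro m
    by_cases hm : m = 0
    · subst hm
      have : g 0 = 1 := by simp [hg]
      rw [this]
      have : |((0:ℤ):ℝ)| ^ (-(2*t)) = 0 := by
        rw [show |((0:ℤ):ℝ)| = 0 by simp, Real.zero_rpow (by intro h; linarith [neg_eq_zero.1 h])]
      simp [this]
      positivity
    · have hm' : (1:ℝ) ≤ (m:ℝ)^2 := by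
        have : (1:ℝ) ≤ |(m:ℝ)| := by
          rw [← Int.cast_abs]
          exact_mod_cast Int.one_le_abs (by simpa using hm)
        nlinarith [sq_abs ((m:ℝ))]
      have h1 : g m ≤ ((m:ℝ)^2) ^ (-t) := by
        apply Real.rpow_le_rpow_of_nonpos (by nlinarith) (by linarith) (by linarith)
      have h2 : ((m:ℝ)^2) ^ (-t) = |(m:ℝ)| ^ (-(2*t)) := by
        rw [← sq_abs, ← Real.rpow_natCast |(m:ℝ)| 2, ← Real.rpow_mul (abs_nonneg _)]
        norm_num
      calc g m ≤ |(m:ℝ)| ^ (-(2*t)) := h2 ▸ h1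
        _ ≤ (if m = 0 then (1:ℝ) else 0) + |(m:ℝ)| ^ (-(2*t)) := by
            split <;> simp <;> norm_num
  rw [← ENNReal.ofReal_tsum_of_nonneg hgnn hsum]
  exact ENNReal.ofReal_ne_top

/-- Finiteness of the Cauchy–Schwarz constant: `∑ ⟨ζ⟩^{-2s₀} < ∞` for `s₀ > d/2`. -/
lemma lam_ne_top {s₀ : ℝ} (hs₀ : (d:ℝ)/2 < s₀) :
    (∑' ζ : Fin d → ℤ, ENNReal.ofReal (latJap ζ ^ (-s₀)) ^ 2) ≠ ⊤ := by
  have hterm : ∀ ζ : Fin d → ℤ, ENNReal.ofReal (latJap ζ ^ (-s₀)) ^ 2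
      = ENNReal.ofReal ((1 + ∑ i, ((ζ i:ℝ))^2) ^ (-s₀)) := by
    intro ζ
    have hP : (0:ℝ) < 1 + ∑ i, ((ζ i:ℝ))^2 := by positivity
    rw [← ENNReal.ofReal_pow (Real.rpow_nonneg (latJap_pos ζ).le _)]
    congr 1
    rw [latJap, Real.sqrt_eq_rpow, ← Real.rpow_mul hP.le,
      ← Real.rpow_natCast ((1 + ∑ i, ((ζ i:ℝ))^2) ^ ((1:ℝ)/2 * (-s₀))) 2,
      ← Real.rpow_mul hP.le]
    ring_nf
  have hs₀nn : (0:ℝ) < s₀ := lt_of_le_of_lt (by positivity) hs₀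
  simp_rw [hterm]
  rcases Nat.eq_zero_or_pos d with hd | hd
  · subst hd
    rw [tsum_eq_single (fun i : Fin 0 => (0:ℤ))
      (fun b hb => absurd (Subsingleton.elim b _) hb)]
    exact ENNReal.ofReal_ne_top
  have hd1 : (1:ℝ) ≤ (d:ℝ) := by exact_mod_cast hd
  set t : ℝ := s₀ / d with htdef
  have ht : 1/2 < t := by
    rw [htdef, lt_div_iff₀ (by linarith)]
    calc 1/2 * (d:ℝ) = (d:ℝ)/2 := by ring
      _ < s₀ := hs₀
  have htpos : 0 < t := lt_trans (by norm_num) ht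
  have hbound : ∀ ζ : Fin d → ℤ, ENNReal.ofReal ((1 + ∑ i, ((ζ i:ℝ))^2) ^ (-s₀))
      ≤ ∏ i, ENNReal.ofReal ((1 + ((ζ i:ℝ))^2) ^ (-t)) := by
    intro ζ
    have hP : (0:ℝ) < 1 + ∑ i, ((ζ i:ℝ))^2 := by positivity
    rw [← ENNReal.ofReal_prod_of_nonneg (fun i _ => Real.rpow_nonneg (by positivity) _)]
    apply ENNReal.ofReal_le_ofReal
    have hfp := Real.finset_prod_rpow Finset.univ (fun i : Fin d => 1 + ((ζ i:ℝ))^2)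
      (fun i _ => by positivity) (-t)
    rw [hfp]
    have hQP : (∏ i, (1 + ((ζ i:ℝ))^2)) ≤ (1 + ∑ i, ((ζ i:ℝ))^2) ^ d := by
      calc (∏ i, (1 + ((ζ i:ℝ))^2)) ≤ ∏ _i : Fin d, (1 + ∑ i, ((ζ i:ℝ))^2) := by
            apply Finset.prod_le_prod (fun i _ => by positivity)
            intro i _
            have : ((ζ i:ℝ))^2 ≤ ∑ j, ((ζ j:ℝ))^2 :=
              Finset.single_le_sum (f := fun j => ((ζ j:ℝ))^2)
                (fun j _ => sq_nonneg _) (Finset.mem_univ i)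
            linarith
        _ = (1 + ∑ i, ((ζ i:ℝ))^2) ^ d := by
            rw [Finset.prod_const, Finset.card_univ, Fintype.card_fin]
    have hprodpos : (0:ℝ) < ∏ i, (1 + ((ζ i:ℝ))^2) :=
      Finset.prod_pos fun i _ => by positivity
    calc (1 + ∑ i, ((ζ i:ℝ))^2) ^ (-s₀)
        = ((1 + ∑ i, ((ζ i:ℝ))^2) ^ d) ^ (-t) := by
          rw [← Real.rpow_natCast (1 + ∑ i, ((ζ i:ℝ))^2) d, ← Real.rpow_mul hP.le]
          congr 1
          rw [htdef]
          field_simp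
      _ ≤ (∏ i, (1 + ((ζ i:ℝ))^2)) ^ (-t) :=
          Real.rpow_le_rpow_of_nonpos hprodpos hQP (by linarith)
  apply ne_top_of_le_ne_top _ (ENNReal.tsum_le_tsum hbound)
  rw [tsum_pi_prod d (fun m => ENNReal.ofReal ((1 + (m:ℝ)^2) ^ (-t)))]
  exact ENNReal.pow_ne_top (int_sum_ne_top ht)

end St11

namespace St11
variable {d : ℕ}

lemma convPow_one (c : (Fin d → ℤ) → ℂ) : convPow c 1 = c := by
  funext ξ
  show conv (convPow c 0) c ξ = c ξ
  rw [conv]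
  rw [tsum_eq_single ξ]
  · simp [convPow]
  · intro ζ hζ
    have : ξ - ζ ≠ 0 := by
      intro h
      rw [sub_eq_zero] at h
      exact hζ h.symm
    simp [convPow, this]

end St11

/-- Composition with a holomorphic function `f(z) = Σ aₙ zⁿ`,
`f(0)=0`, holomorphic on `{|z| < M₀}` and with coefficients `|aₙ| ≤ Kⁿ`:
there exist `ε₀ > 0` and `C > 0` such that for all `σ > 0` and all
`u ∈ H^{σ,s} ∩ H^{σ,s₀}` with `‖u‖_{H^{σ,s₀}} ≤ ε₀`, one has
`f(u) ∈ H^{σ,s}` with `‖f(u)‖_{H^{σ,s}} ≤ C ‖u‖_{H^{σ,s}}`. -/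
theorem statement11 (d : ℕ) (s₀ s M₀ K : ℝ) (hs₀ : (d : ℝ) / 2 < s₀)
    (hs : 0 ≤ s) (hM₀ : 0 < M₀) (hK : 0 < K)
    (a : ℕ → ℂ) (ha0 : a 0 = 0) (haK : ∀ n : ℕ, ‖a n‖ ≤ K ^ n) :
    ∃ ε₀ : ℝ, 0 < ε₀ ∧ ∃ C : ℝ, 0 < C ∧
      ∀ σ : ℝ, 0 < σ → ∀ c : (Fin d → ℤ) → ℂ,
        hNormSq σ s c ≠ ⊤ → hNorm σ s₀ c ≤ ENNReal.ofReal ε₀ →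
        hNorm σ s (fun ξ => ∑' n : ℕ, a n * convPow c n ξ)
          ≤ ENNReal.ofReal C * hNorm σ s c := by
  classical
  have hs₀nn : (0:ℝ) ≤ s₀ := le_of_lt (lt_of_le_of_lt (by positivity) hs₀)
  -- constants
  set Λ : ℝ≥0∞ := ∑' ζ : Fin d → ℤ, ENNReal.ofReal (latJap ζ ^ (-s₀)) ^ 2 with hΛdef
  have hΛ : Λ ≠ ⊤ := St11.lam_ne_top hs₀
  set C₀ : ℝ≥0∞ := Λ ^ (1/2:ℝ) with hC₀def
  have hC₀ : C₀ ≠ ⊤ := ENNReal.rpow_ne_top_of_nonneg (by norm_num) hΛ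
  set Ts : ℝ≥0∞ := ENNReal.ofReal (2 ^ s) * C₀ with hTsdef
  set Ts₀ : ℝ≥0∞ := ENNReal.ofReal (2 ^ s₀) * C₀ with hTs₀def
  set A : ℝ≥0∞ := 2 * Ts₀ with hAdef
  set B : ℝ≥0∞ := 2 * Ts + A with hBdef
  have hTs : Ts ≠ ⊤ := ENNReal.mul_ne_top ENNReal.ofReal_ne_top hC₀
  have hTs₀ : Ts₀ ≠ ⊤ := ENNReal.mul_ne_top ENNReal.ofReal_ne_top hC₀
  have hA : A ≠ ⊤ := ENNReal.mul_ne_top (by norm_num) hTs₀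
  have hB : B ≠ ⊤ := ENNReal.add_ne_top.2 ⟨ENNReal.mul_ne_top (by norm_num) hTs, hA⟩
  have hTsB : Ts ≤ B := by
    rw [hBdef]
    calc Ts = 1 * Ts := (one_mul _).symm
      _ ≤ 2 * Ts := mul_le_mul' (by norm_num) le_rfl
      _ ≤ 2 * Ts + A := le_self_add
  have hAB : A ≤ B := le_add_self
  set b : ℝ := B.toReal with hbdef
  have hbnn : 0 ≤ b := ENNReal.toReal_nonneg
  set ε₀ : ℝ := min M₀ (1 / (2 * K * (b + 1))) with hε₀def
  have hε₀pos : 0 < ε₀ := lt_min hM₀ (by positivity)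
  -- series constant
  set Creal : ℝ := ∑' n : ℕ, K * ((n:ℝ) + 1) * (1/2)^n with hCrealdef
  have hsummable : Summable (fun n : ℕ => K * ((n:ℝ) + 1) * (1/2)^n) := by
    have h1 : Summable (fun n : ℕ => (n:ℝ) * (1/2)^n) := by
      have := summable_pow_mul_geometric_of_norm_lt_one (R := ℝ) 1 (r := 1/2)
        (by rw [Real.norm_eq_abs, abs_of_pos (by norm_num : (0:ℝ) < 1/2)]; norm_num)
      simpa using this
    have h2 : Summable (fun n : ℕ => ((1:ℝ)/2)^n) :=
      summable_geometric_of_lt_one (by norm_num) (by norm_num)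
    have h3 := (h1.add h2).mul_left K
    apply h3.congr
    intro n
    ring
  have hCrealpos : 0 < Creal := by
    rw [hCrealdef]
    apply Summable.tsum_pos hsummable (fun n => by positivity) 0
    norm_num
    exact hK
  refine ⟨ε₀, hε₀pos, Creal, hCrealpos, ?_⟩
  intro σ hσ c hfin hsmall
  rw [St11.hNorm_eq] at hsmall
  rw [St11.hNorm_eq, St11.hNorm_eq]
  set ε : ℝ≥0∞ := St11.l2 (St11.Nc σ s₀ c) with hεdef
  set Ms : ℝ≥0∞ := St11.l2 (St11.Nc σ s c) with hMsdef
  -- combined tame estimates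
  have htame : ∀ (s' : ℝ), 0 ≤ s' → ∀ f g : (Fin d → ℤ) → ℂ,
      St11.l2 (St11.Nc σ s' (conv f g)) ≤ (ENNReal.ofReal (2 ^ s') * C₀) *
        (St11.l2 (St11.Nc σ s' f) * St11.l2 (St11.Nc σ s₀ g)
          + St11.l2 (St11.Nc σ s₀ f) * St11.l2 (St11.Nc σ s' g)) := by
    intro s' hs' f g
    have hL1f := St11.L1_le σ s₀ f
    have hL1g := St11.L1_le σ s₀ g
    rw [← hΛdef, ← hC₀def] at hL1f hL1g
    calc St11.l2 (St11.Nc σ s' (conv f g))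
        ≤ ENNReal.ofReal (2 ^ s') *
          (St11.l2 (St11.Nc σ s' f) * St11.L1 σ g
            + St11.L1 σ f * St11.l2 (St11.Nc σ s' g)) := St11.tame σ s' hσ.le hs' f g
      _ ≤ ENNReal.ofReal (2 ^ s') *
          (St11.l2 (St11.Nc σ s' f) * (C₀ * St11.l2 (St11.Nc σ s₀ g))
            + (C₀ * St11.l2 (St11.Nc σ s₀ f)) * St11.l2 (St11.Nc σ s' g)) := by
          apply mul_le_mul' le_rfl
          exact add_le_add (mul_le_mul' le_rfl hL1g) (mul_le_mul' hL1f le_rfl)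
      _ = (ENNReal.ofReal (2 ^ s') * C₀) *
          (St11.l2 (St11.Nc σ s' f) * St11.l2 (St11.Nc σ s₀ g)
            + St11.l2 (St11.Nc σ s₀ f) * St11.l2 (St11.Nc σ s' g)) := by
          ring
  -- `s₀`-level induction
  have h0 : ∀ n : ℕ, St11.l2 (St11.Nc σ s₀ (convPow c (n+1))) ≤ A ^ n * ε ^ (n+1) := by
    intro n
    induction n with
    | zero => simp [St11.convPow_one, hεdef]
    | succ n ih =>
      have hstep : convPow c (n+2) = conv (convPow c (n+1)) c := rfl
      rw [hstep]
      calc St11.l2 (St11.Nc σ s₀ (conv (convPow c (n+1)) c))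
          ≤ Ts₀ * (St11.l2 (St11.Nc σ s₀ (convPow c (n+1))) * ε
              + St11.l2 (St11.Nc σ s₀ (convPow c (n+1))) * ε) := by
            have := htame s₀ hs₀nn (convPow c (n+1)) c
            rw [← hTs₀def] at this
            exact this
        _ = A * (St11.l2 (St11.Nc σ s₀ (convPow c (n+1))) * ε) := by rw [hAdef]; ring
        _ ≤ A * (A ^ n * ε ^ (n+1) * ε) := mul_le_mul' le_rfl (mul_le_mul' ih le_rfl)
        _ = A ^ (n+1) * ε ^ (n+2) := by ring
  -- `s`-level induction
  have hM : ∀ n : ℕ, St11.l2 (St11.Nc σ s (convPow c (n+1)))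
      ≤ (n+1 : ℝ≥0∞) * B ^ n * ε ^ n * Ms := by
    intro n
    induction n with
    | zero => simp [St11.convPow_one, hMsdef]
    | succ n ih =>
      have hstep : convPow c (n+2) = conv (convPow c (n+1)) c := rfl
      rw [hstep]
      calc St11.l2 (St11.Nc σ s (conv (convPow c (n+1)) c))
          ≤ Ts * (St11.l2 (St11.Nc σ s (convPow c (n+1))) * ε
              + St11.l2 (St11.Nc σ s₀ (convPow c (n+1))) * Ms) := by
            have := htame s hs (convPow c (n+1)) c
            rw [← hTsdef] at this
            exact this
        _ ≤ Ts * (((n+1 : ℝ≥0∞) * B ^ n * ε ^ n * Ms) * ε + (A ^ n * ε ^ (n+1)) * Ms) := by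
            apply mul_le_mul' le_rfl
            exact add_le_add (mul_le_mul' ih le_rfl) (mul_le_mul' (h0 n) le_rfl)
        _ ≤ Ts * (((n+1 : ℝ≥0∞) * B ^ n * ε ^ n * Ms) * ε + (B ^ n * ε ^ (n+1)) * Ms) := by
            apply mul_le_mul' le_rfl
            apply add_le_add le_rfl
            exact mul_le_mul' (mul_le_mul' (pow_le_pow_left' hAB n) le_rfl) le_rfl
        _ = Ts * ((n+2 : ℝ≥0∞) * B ^ n * ε ^ (n+1) * Ms) := by push_cast; ring
        _ ≤ B * ((n+2 : ℝ≥0∞) * B ^ n * ε ^ (n+1) * Ms) := mul_le_mul' hTsB le_rfl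
        _ = (n+2 : ℝ≥0∞) * B ^ (n+1) * ε ^ (n+1) * Ms := by push_cast; ring
        _ = (↑(n+1) + 1 : ℝ≥0∞) * B ^ (n+1) * ε ^ (n+1) * Ms := by push_cast; ring
  -- geometric ratio
  have hq : ENNReal.ofReal K * B * ENNReal.ofReal ε₀ ≤ ENNReal.ofReal (1/2) := by
    rw [show B = ENNReal.ofReal b from (ENNReal.ofReal_toReal hB).symm,
      ← ENNReal.ofReal_mul hK.le, ← ENNReal.ofReal_mul (by positivity)]
    apply ENNReal.ofReal_le_ofReal
    have hε₀le : ε₀ ≤ 1 / (2 * K * (b + 1)) := min_le_right _ _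
    have hKb : (0:ℝ) < 2 * K * (b + 1) := by positivity
    calc K * b * ε₀ ≤ K * (b+1) * (1 / (2 * K * (b + 1))) := by
          apply mul_le_mul (by nlinarith) hε₀le hε₀pos.le (by positivity)
      _ = 1/2 := by field_simp
  have hεbound : ε ≤ ENNReal.ofReal ε₀ := hsmall
  -- final summation
  have hpt : ∀ ξ, St11.Nc σ s (fun ξ => ∑' n : ℕ, a n * convPow c n ξ) ξ
      ≤ ∑' n : ℕ, (‖a n‖₊ : ℝ≥0∞) * St11.Nc σ s (convPow c n) ξ := by
    intro ξ
    rw [St11.Nc]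
    calc St11.wh σ s ξ * (‖∑' n : ℕ, a n * convPow c n ξ‖₊ : ℝ≥0∞)
        ≤ St11.wh σ s ξ * ∑' n : ℕ, (‖a n * convPow c n ξ‖₊ : ℝ≥0∞) :=
          mul_le_mul' le_rfl (St11.ennnorm_tsum_le _)
      _ = ∑' n : ℕ, (‖a n‖₊ : ℝ≥0∞) * (St11.wh σ s ξ * (‖convPow c n ξ‖₊ : ℝ≥0∞)) := by
          rw [← ENNReal.tsum_mul_left]
          apply tsum_congr
          intro n
          rw [nnnorm_mul, ENNReal.coe_mul]
          ring
      _ = ∑' n : ℕ, (‖a n‖₊ : ℝ≥0∞) * St11.Nc σ s (convPow c n) ξ := rfl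
  calc St11.l2 (St11.Nc σ s (fun ξ => ∑' n : ℕ, a n * convPow c n ξ))
      ≤ St11.l2 (fun ξ => ∑' n : ℕ, (‖a n‖₊ : ℝ≥0∞) * St11.Nc σ s (convPow c n) ξ) :=
        St11.l2_mono hpt
    _ ≤ ∑' n : ℕ, St11.l2 (fun ξ => (‖a n‖₊ : ℝ≥0∞) * St11.Nc σ s (convPow c n) ξ) :=
        St11.l2_tsum_le _
    _ = ∑' n : ℕ, (‖a n‖₊ : ℝ≥0∞) * St11.l2 (St11.Nc σ s (convPow c n)) := by
        apply tsum_congr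
        intro n
        exact St11.l2_const_mul _ _
    _ ≤ ENNReal.ofReal Creal * Ms := ?_
  rw [tsum_eq_zero_add' ENNReal.summable]
  have ha0' : (‖a 0‖₊ : ℝ≥0∞) = 0 := by simp [ha0]
  rw [ha0', zero_mul, zero_add]
  have hterm : ∀ n : ℕ, (‖a (n+1)‖₊ : ℝ≥0∞) * St11.l2 (St11.Nc σ s (convPow c (n+1)))
      ≤ ENNReal.ofReal (K * ((n:ℝ) + 1) * (1/2)^n) * Ms := by
    intro n
    have haKn : (‖a (n+1)‖₊ : ℝ≥0∞) ≤ ENNReal.ofReal (K ^ (n+1)) := by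
      rw [← ENNReal.ofReal_coe_nnreal, coe_nnnorm]
      exact ENNReal.ofReal_le_ofReal (haK (n+1))
    have hqn : ENNReal.ofReal K * B * ε ≤ ENNReal.ofReal (1/2) :=
      le_trans (mul_le_mul' le_rfl hεbound) hq
    calc (‖a (n+1)‖₊ : ℝ≥0∞) * St11.l2 (St11.Nc σ s (convPow c (n+1)))
        ≤ ENNReal.ofReal (K ^ (n+1)) * ((n+1 : ℝ≥0∞) * B ^ n * ε ^ n * Ms) :=
          mul_le_mul' haKn (hM n)
      _ = ENNReal.ofReal K * (n+1 : ℝ≥0∞) * (ENNReal.ofReal K * B * ε) ^ n * Ms := by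
          rw [ENNReal.ofReal_pow hK.le, pow_succ, mul_pow, mul_pow]
          ring
      _ ≤ ENNReal.ofReal K * (n+1 : ℝ≥0∞) * ENNReal.ofReal (1/2) ^ n * Ms := by
          apply mul_le_mul' _ le_rfl
          exact mul_le_mul' le_rfl (pow_le_pow_left' hqn n)
      _ = ENNReal.ofReal (K * ((n:ℝ) + 1) * (1/2)^n) * Ms := by
          congr 1
          rw [ENNReal.ofReal_mul (by positivity), ENNReal.ofReal_mul hK.le,
            ENNReal.ofReal_pow (by norm_num)]
          congr 2
          rw [ENNReal.ofReal_add (by positivity) (by norm_num)]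
          simp
  calc (∑' n : ℕ, (‖a (n+1)‖₊ : ℝ≥0∞) * St11.l2 (St11.Nc σ s (convPow c (n+1))))
      ≤ ∑' n : ℕ, ENNReal.ofReal (K * ((n:ℝ) + 1) * (1/2)^n) * Ms :=
        ENNReal.tsum_le_tsum hterm
    _ = (∑' n : ℕ, ENNReal.ofReal (K * ((n:ℝ) + 1) * (1/2)^n)) * Ms :=
        ENNReal.tsum_mul_right
    _ = ENNReal.ofReal Creal * Ms := by
        rw [← ENNReal.ofReal_tsum_of_nonneg (fun n => by positivity) hsummable]
end
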